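/- arXiv:2004.03210 — 5 statements merged into one kernel-verified Lean document; each statement's English description precedes it below -/
import Mathlib

section
/- Let α > 0, let U ⊆ ℝ^d be open, set k := ⌊α⌋ + 1, and let j ≥ k be an integer. There exists a constant c > 0 (depending only on d, α, j) such that for every bounded continuous f : U → ℝ, every r > 0, and every x ∈ U with B(x, r(k+2)) ⊆ U, one has sup_{0<|h|≤r} |Δ_h^k f(x)|/|h|^α ≤ c r^{−α} sup_{z∈U} |f(z)| + c sup_{0<|h|≤r/j} sup_{z ∈ B(x, r(k+1))} |Δ_h^j f(z)|/|h|^α. -/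
open MeasureTheory ENNReal Metric Set Filter Topology

noncomputable section

/-- Euclidean space ℝ^d. -/
abbrev Ed (d : ℕ) := EuclideanSpace ℝ (Fin d)

/-- First difference operator `Δ_h f (x) = f (x+h) - f x`. -/
def deltaOp {E : Type*} [Add E] (h : E) (f : E → ℝ) : E → ℝ := fun x => f (x + h) - f x

/-- Iterated difference operator `Δ_h^n`. -/
def iterDelta {E : Type*} [Add E] (h : E) (n : ℕ) (f : E → ℝ) : E → ℝ := (deltaOp h)^[n] f

section AuxiliaryLemmas
open Finset

section Infra
variable {E : Type*} [NormedAddCommGroup E] [NormedSpace ℝ E]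

def DOp (h : E) : Module.End ℝ (E → ℝ) where
  toFun := deltaOp h
  map_add' f g := by funext x; simp [deltaOp]; ring
  map_smul' c f := by funext x; simp [deltaOp]; ring

@[simp] lemma DOp_apply (h : E) (f : E → ℝ) : DOp h f = deltaOp h f := rfl

lemma iterDelta_eq_pow (h : E) (n : ℕ) (f : E → ℝ) : iterDelta h n f = (DOp h ^ n) f := by
  induction n with
  | zero => simp [iterDelta]
  | succ n ih =>
    rw [iterDelta, Function.iterate_succ_apply', pow_succ', Module.End.mul_apply, DOp_apply,
      ← ih, iterDelta]

lemma iterDelta_succ (h : E) (n : ℕ) (f : E → ℝ) (z : E) :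
    iterDelta h (n + 1) f z = iterDelta h n f (z + h) - iterDelta h n f z := by
  rw [iterDelta, Function.iterate_succ_apply']
  rfl

lemma iterDelta_add_exp (h : E) (a b : ℕ) (f : E → ℝ) :
    iterDelta h (a + b) f = iterDelta h a (iterDelta h b f) :=
  Function.iterate_add_apply _ a b f

lemma abs_iterDelta_le (h : E) (n : ℕ) (u : E → ℝ) (A : ℝ) :
    ∀ z : E, (∀ i : ℕ, i ≤ n → |u (z + (i : ℝ) • h)| ≤ A) → |iterDelta h n u z| ≤ 2 ^ n * A := by
  induction n with
  | zero =>
    intro z hz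
    simpa [iterDelta] using hz 0 le_rfl
  | succ n ih =>
    intro z hz
    rw [iterDelta_succ]
    have h1 : |iterDelta h n u (z + h)| ≤ 2 ^ n * A := by
      apply ih
      intro i hi
      have : z + h + (i : ℝ) • h = z + ((i + 1 : ℕ) : ℝ) • h := by
        push_cast
        module
      rw [this]
      exact hz (i + 1) (by omega)
    have h2 : |iterDelta h n u z| ≤ 2 ^ n * A := ih z fun i hi => hz i (by omega)
    calc |iterDelta h n u (z + h) - iterDelta h n u z|
        ≤ |iterDelta h n u (z + h)| + |iterDelta h n u z| := abs_sub _ _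
      _ ≤ 2 ^ n * A + 2 ^ n * A := add_le_add h1 h2
      _ = 2 ^ (n + 1) * A := by ring

lemma DOp_double (h : E) : DOp (h + h) = DOp h ^ 2 + (2 : ℝ) • DOp h := by
  apply LinearMap.ext; intro f; funext x
  simp [DOp, deltaOp, sq, Module.End.mul_apply, ← add_assoc]
  ring

lemma doubling (h : E) (m : ℕ) (f : E → ℝ) (z : E) :
    iterDelta (h + h) m f z =
      ∑ i ∈ Finset.range (m + 1),
        (m.choose i : ℝ) * ((2 : ℝ) ^ (m - i) * iterDelta h (m + i) f z) := by
  have hc : Commute (DOp h ^ 2) ((2 : ℝ) • DOp h) :=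
    ((Commute.refl (DOp h)).pow_left 2).smul_right 2
  have key : (DOp (h + h)) ^ m =
      ∑ i ∈ Finset.range (m + 1),
        ((m.choose i : ℝ) * (2 : ℝ) ^ (m - i)) • (DOp h) ^ (m + i) := by
    rw [DOp_double, hc.add_pow]
    apply Finset.sum_congr rfl
    intro i hi
    have hi' : i ≤ m := by simpa using Nat.lt_succ_iff.mp (Finset.mem_range.mp hi)
    rw [smul_pow, ← pow_mul]
    have hexp : 2 * i + (m - i) = m + i := by omega
    rw [mul_smul_comm, ← pow_add, hexp]
    rw [← (Nat.cast_commute (m.choose i) ((2:ℝ) ^ (m - i) • DOp h ^ (m + i))).eq,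
      ← nsmul_eq_mul, ← Nat.cast_smul_eq_nsmul ℝ, smul_smul]
  have := congrArg (fun (L : Module.End ℝ (E → ℝ)) => L f z) key
  rw [iterDelta_eq_pow, this]
  rw [LinearMap.sum_apply]
  rw [Finset.sum_apply]
  apply Finset.sum_congr rfl
  intro i _
  rw [LinearMap.smul_apply, Pi.smul_apply, smul_eq_mul, ← iterDelta_eq_pow]
  ring

end Infra

section Aux

lemma choose_le_two_pow' (m i : ℕ) : m.choose i ≤ 2 ^ m := by
  rcases le_or_gt i m with h | h
  · calc m.choose i ≤ ∑ t ∈ Finset.range (m + 1), m.choose t :=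
        Finset.single_le_sum (fun t _ => Nat.zero_le _) (Finset.mem_range.mpr (by omega))
      _ = 2 ^ m := Nat.sum_range_choose m
  · simp [Nat.choose_eq_zero_of_lt h]

lemma exists_maximal_pow {a b : ℝ} (ha : 0 < a) (hab : a ≤ b) :
    ∃ L : ℕ, 2 ^ L * a ≤ b ∧ b < 2 ^ (L + 1) * a := by
  have hb : 0 < b := lt_of_lt_of_le ha hab
  set n := ⌊b / a⌋₊ with hn
  have hn1 : 1 ≤ n := Nat.le_floor (by rw [le_div_iff₀ ha, Nat.cast_one, one_mul]; exact hab)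
  refine ⟨Nat.log 2 n, ?_, ?_⟩
  · have h1 : (2:ℕ) ^ Nat.log 2 n ≤ n := Nat.pow_log_le_self 2 (by omega)
    have h2 : (n : ℝ) ≤ b / a := Nat.floor_le (by positivity)
    have : ((2:ℕ) ^ Nat.log 2 n : ℝ) ≤ b / a := le_trans (by exact_mod_cast h1) h2
    rw [le_div_iff₀ ha] at this
    calc (2:ℝ) ^ Nat.log 2 n * a = ((2:ℕ) ^ Nat.log 2 n : ℝ) * a := by push_cast; ring
      _ ≤ b := this
  · have h1 : n < 2 ^ (Nat.log 2 n + 1) := Nat.lt_pow_succ_log_self (by norm_num) n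
    have h2 : b / a < (n : ℝ) + 1 := Nat.lt_floor_add_one _
    have h3 : ((n : ℝ) + 1) ≤ ((2:ℕ) ^ (Nat.log 2 n + 1) : ℝ) := by exact_mod_cast h1
    have : b / a < ((2:ℕ) ^ (Nat.log 2 n + 1) : ℝ) := lt_of_lt_of_le h2 h3
    rw [div_lt_iff₀ ha] at this
    calc b < ((2:ℕ) ^ (Nat.log 2 n + 1) : ℝ) * a := this
      _ = (2:ℝ) ^ (Nat.log 2 n + 1) * a := by push_cast; ring

lemma geom_sum_le_inv {q : ℝ} (h0 : 0 ≤ q) (h1 : q < 1) (n : ℕ) :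
    ∑ l ∈ Finset.range n, q ^ l ≤ (1 - q)⁻¹ := by
  rw [geom_sum_eq h1.ne]
  rw [div_le_iff_of_neg (by linarith : q - 1 < 0)]
  have hq : (0:ℝ) < 1 - q := by linarith
  have : (1 - q)⁻¹ * (q - 1) = -1 := by field_simp; ring
  rw [this]
  nlinarith [pow_nonneg h0 n]

end Aux

section Key

set_option maxHeartbeats 1000000

lemma dist_add_self_left' {E : Type*} [NormedAddCommGroup E] (z v : E) :
    dist (z + v) z = ‖v‖ := by
  simp [dist_eq_norm]

lemma key_lemma {d : ℕ} {k j : ℕ} {α : ℝ} (hα : 0 < α) (hk1 : 1 ≤ k) (hαk : α < k)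
    (hkj : k ≤ j) :
    ∀ i : ℕ, k ≤ j - i →
    ∃ c : ℝ, 0 < c ∧ ∀ (f : Ed d → ℝ) (M r b : ℝ) (x : Ed d),
      0 ≤ M → 0 ≤ b → 0 < r →
      (∀ z : Ed d, dist z x < r * (k + 2) → |f z| ≤ M) →
      (∀ (g z : Ed d), 0 < ‖g‖ → ‖g‖ ≤ r / j → dist z x < r * (k + 1) →
        |iterDelta g j f z| ≤ b * ‖g‖ ^ α) →
      ∀ (g z : Ed d), 0 < ‖g‖ → ‖g‖ ≤ r / (j : ℝ) ^ 2 →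
        dist z x ≤ r * k + r * (((j - i : ℕ) : ℝ) - k) / j →
        |iterDelta g (j - i) f z| ≤ c * (M * r ^ (-α) + b) * ‖g‖ ^ α := by
  have hj1 : 1 ≤ j := le_trans hk1 hkj
  have hj0 : (0:ℝ) < (j:ℝ) := by exact_mod_cast hj1
  have hj1' : (1:ℝ) ≤ (j:ℝ) := by exact_mod_cast hj1
  have hk0 : (0:ℝ) < (k:ℝ) := by exact_mod_cast hk1
  intro i
  induction i with
  | zero =>
    intro _
    refine ⟨1, one_pos, ?_⟩
    intro f M r b x hM hb hr hfM hjb g z hg hgr hz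
    simp only [Nat.sub_zero] at hz ⊢
    have hgr' : ‖g‖ ≤ r / j := by
      refine le_trans hgr ?_
      rw [div_le_div_iff₀ (by positivity) hj0]
      have hh : (0:ℝ) ≤ r * ((j:ℝ) * ((j:ℝ) - 1)) :=
        mul_nonneg hr.le (mul_nonneg hj0.le (by linarith))
      nlinarith [hh]
    have hz' : dist z x < r * (k + 1) := by
      have h1 : r * (((j:ℕ):ℝ) - k) / j < r := by
        rw [div_lt_iff₀ hj0]
        nlinarith
      calc dist z x ≤ r * k + r * (((j:ℕ):ℝ) - k) / j := hz
        _ < r * k + r := by linarith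
        _ = r * (k + 1) := by ring
    have h1 := hjb g z hg hgr' hz'
    have h2 : (0:ℝ) ≤ M * r ^ (-α) := mul_nonneg hM (Real.rpow_nonneg hr.le _)
    have h3 : (0:ℝ) ≤ ‖g‖ ^ α := Real.rpow_nonneg (norm_nonneg g) _
    nlinarith
  | succ i ih =>
    intro hki
    set m := j - (i + 1) with hm_def
    have hm : k ≤ m := hki
    have hm1 : 1 ≤ m := le_trans hk1 hm
    have hmj : m + 1 ≤ j := by omega
    have hnext : k ≤ j - i := by omega
    have hmeq : j - i = m + 1 := by omega
    have hmcast : (m:ℝ) + 1 ≤ (j:ℝ) := by exact_mod_cast hmj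
    have hkm : (k:ℝ) ≤ (m:ℝ) := by exact_mod_cast hm
    have hm1' : (1:ℝ) ≤ (m:ℝ) := by exact_mod_cast hm1
    obtain ⟨c', hc', H'⟩ := ih hnext
    have h2m0 : (0:ℝ) < 2 ^ m := by positivity
    have hαm : α < (m:ℝ) := lt_of_lt_of_le hαk hkm
    have h2am : (2:ℝ) ^ α < 2 ^ m := by
      rw [← Real.rpow_natCast 2 m]
      exact Real.rpow_lt_rpow_of_exponent_lt one_lt_two hαm
    set q : ℝ := (2:ℝ) ^ α * (1 / 2 ^ m) with hq_def
    have hq0 : 0 ≤ q := by positivity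
    have hq1 : q < 1 := by
      rw [hq_def, mul_one_div, div_lt_one h2m0]
      exact h2am
    set γ : ℝ := (1 - q)⁻¹ with hγ_def
    have hγ0 : (0:ℝ) < γ := inv_pos.mpr (by linarith)
    have h2j0 : (0:ℝ) < (2 * (j:ℝ) ^ 2) ^ α := Real.rpow_pos_of_pos (by positivity) _
    refine ⟨2 ^ m * (2 * (j:ℝ) ^ 2) ^ α + ((m:ℝ) * 8 ^ m * c') * γ, by positivity, ?_⟩
    intro f M r b x hM hb hr hfM hjb g z hg hgr hz
    set K := M * r ^ (-α) + b with hK_def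
    have hMr0 : (0:ℝ) ≤ M * r ^ (-α) := mul_nonneg hM (Real.rpow_nonneg hr.le _)
    have hK0 : 0 ≤ K := by rw [hK_def]; linarith
    have hga : (0:ℝ) ≤ ‖g‖ ^ α := Real.rpow_nonneg (norm_nonneg g) _
    have hrj2 : (0:ℝ) < r / (j:ℝ) ^ 2 := by positivity
    -- Single Marchaud step
    have SS : ∀ g' : Ed d, 0 < ‖g'‖ → ‖g'‖ ≤ r / (j:ℝ) ^ 2 → ∀ z' : Ed d,
        dist z' x ≤ r * k + r * ((m:ℝ) - k) / j →
        |iterDelta g' m f z'| ≤ (1 / 2 ^ m) * |iterDelta (g' + g') m f z'|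
          + ((m:ℝ) * 8 ^ m * c') * K * ‖g'‖ ^ α := by
      intro g' hg' hg'r z' hz'
      have hga' : (0:ℝ) ≤ ‖g'‖ ^ α := Real.rpow_nonneg (norm_nonneg _) _
      set A := c' * K * ‖g'‖ ^ α with hA_def
      have hA0 : 0 ≤ A := by positivity
      have hAbound : ∀ i' : ℕ, i' < m →
          |iterDelta g' (m + (i' + 1)) f z'| ≤ 2 ^ i' * A := by
        intro i' hi'
        have heq : m + (i' + 1) = i' + (m + 1) := by omega
        rw [heq, iterDelta_add_exp]
        apply abs_iterDelta_le
        intro t ht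
        have ht' : (t:ℝ) + 1 ≤ (m:ℝ) := by exact_mod_cast (show t + 1 ≤ m by omega)
        have hdist : dist (z' + (t:ℝ) • g') x ≤ r * k + r * (((j - i : ℕ) : ℝ) - k) / j := by
          rw [hmeq]
          push_cast
          have d1 : dist (z' + (t:ℝ) • g') x ≤ dist z' x + (t:ℝ) * ‖g'‖ := by
            calc dist (z' + (t:ℝ) • g') x ≤ dist (z' + (t:ℝ) • g') z' + dist z' x :=
                dist_triangle _ _ _
              _ = ‖(t:ℝ) • g'‖ + dist z' x := by rw [dist_add_self_left']
              _ = (t:ℝ) * ‖g'‖ + dist z' x := by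
                  rw [norm_smul, Real.norm_eq_abs, abs_of_nonneg (by positivity)]
              _ = dist z' x + (t:ℝ) * ‖g'‖ := by ring
          have d2 : (t:ℝ) * ‖g'‖ ≤ ((m:ℝ) - 1) * ‖g'‖ :=
            mul_le_mul_of_nonneg_right (by linarith) (norm_nonneg _)
          have d3 : ((m:ℝ) - 1) * ‖g'‖ ≤ (j:ℝ) * (r / (j:ℝ) ^ 2) :=
            mul_le_mul (by linarith) hg'r (norm_nonneg _) hj0.le
          have d4 : (j:ℝ) * (r / (j:ℝ) ^ 2) = r / j := by
            rw [pow_two, ← div_div, mul_div_cancel₀ _ hj0.ne']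
          have d5 : r * ((m:ℝ) + 1 - k) / j = r * ((m:ℝ) - k) / j + r / j := by ring
          rw [d5]
          linarith
        have hres := H' f M r b x hM hb hr hfM hjb g' (z' + (t:ℝ) • g') hg' hg'r hdist
        rw [hmeq, ← hK_def] at hres
        exact hres
      -- the doubling identity, rearranged
      have hid := doubling g' m f z'
      rw [Finset.sum_range_succ'] at hid
      set S := ∑ i' ∈ Finset.range m,
        (m.choose (i' + 1) : ℝ) * ((2:ℝ) ^ (m - (i' + 1)) * iterDelta g' (m + (i' + 1)) f z')
        with hS_def
      have hid2 : (2:ℝ) ^ m * iterDelta g' m f z' = iterDelta (g' + g') m f z' - S := by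
        rw [hid]
        simp only [Nat.choose_zero_right, Nat.cast_one, Nat.sub_zero, Nat.add_zero]
        ring
      have hterm : ∀ i' ∈ Finset.range m,
          |(m.choose (i' + 1) : ℝ) * ((2:ℝ) ^ (m - (i' + 1)) * iterDelta g' (m + (i' + 1)) f z')|
            ≤ 8 ^ m * A := by
        intro i' hi'
        have hi'm : i' < m := Finset.mem_range.mp hi'
        rw [abs_mul, abs_mul]
        have e1 : |(m.choose (i' + 1) : ℝ)| ≤ 2 ^ m := by
          rw [abs_of_nonneg (by positivity)]
          exact_mod_cast choose_le_two_pow' m (i' + 1)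
        have e2 : |(2:ℝ) ^ (m - (i' + 1))| ≤ 2 ^ m := by
          rw [abs_of_nonneg (by positivity)]
          exact pow_le_pow_right₀ one_le_two (by omega)
        have e3 : |iterDelta g' (m + (i' + 1)) f z'| ≤ 2 ^ m * A := by
          refine le_trans (hAbound i' hi'm) ?_
          exact mul_le_mul_of_nonneg_right (pow_le_pow_right₀ one_le_two hi'm.le) hA0
        calc |(m.choose (i' + 1) : ℝ)| * (|(2:ℝ) ^ (m - (i' + 1))| * |iterDelta g' (m + (i' + 1)) f z'|)
            ≤ 2 ^ m * (2 ^ m * (2 ^ m * A)) := by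
              exact mul_le_mul e1 (mul_le_mul e2 e3 (abs_nonneg _) (by positivity))
                (by positivity) (by positivity)
          _ = 8 ^ m * A := by
              rw [show (8:ℝ) = 2 * 2 * 2 by norm_num, mul_pow, mul_pow]
              ring
      have hSbound : |S| ≤ (m:ℝ) * 8 ^ m * A := by
        calc |S| ≤ ∑ i' ∈ Finset.range m,
            |(m.choose (i' + 1) : ℝ) * ((2:ℝ) ^ (m - (i' + 1)) * iterDelta g' (m + (i' + 1)) f z')| :=
            Finset.abs_sum_le_sum_abs _ _
          _ ≤ ∑ _i' ∈ Finset.range m, 8 ^ m * A := Finset.sum_le_sum hterm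
          _ = (m:ℝ) * 8 ^ m * A := by
              rw [Finset.sum_const, Finset.card_range, nsmul_eq_mul]
              ring
      have h2abs : (2:ℝ) ^ m * |iterDelta g' m f z'|
          ≤ |iterDelta (g' + g') m f z'| + (m:ℝ) * 8 ^ m * A := by
        have e : |(2:ℝ) ^ m * iterDelta g' m f z'| = |iterDelta (g' + g') m f z' - S| := by
          rw [hid2]
        rw [abs_mul, abs_of_nonneg h2m0.le] at e
        calc (2:ℝ) ^ m * |iterDelta g' m f z'| = |iterDelta (g' + g') m f z' - S| := e
          _ ≤ |iterDelta (g' + g') m f z'| + |S| := abs_sub _ _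
          _ ≤ |iterDelta (g' + g') m f z'| + (m:ℝ) * 8 ^ m * A := by linarith
      have h2m1 : (1:ℝ) ≤ 2 ^ m := one_le_pow₀ one_le_two
      have hfin : |iterDelta g' m f z'| ≤ (1 / 2 ^ m) * |iterDelta (g' + g') m f z'|
          + (m:ℝ) * 8 ^ m * A := by
        have h1 : |iterDelta g' m f z'|
            ≤ (|iterDelta (g' + g') m f z'| + (m:ℝ) * 8 ^ m * A) / 2 ^ m := by
          rw [le_div_iff₀ h2m0]
          linarith
        have h2 : (m:ℝ) * 8 ^ m * A / 2 ^ m ≤ (m:ℝ) * 8 ^ m * A :=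
          div_le_self (by positivity) h2m1
        have h3 : (|iterDelta (g' + g') m f z'| + (m:ℝ) * 8 ^ m * A) / 2 ^ m
            = (1 / 2 ^ m) * |iterDelta (g' + g') m f z'| + (m:ℝ) * 8 ^ m * A / 2 ^ m := by
          ring
        rw [h3] at h1
        linarith
      calc |iterDelta g' m f z'| ≤ (1 / 2 ^ m) * |iterDelta (g' + g') m f z'|
          + (m:ℝ) * 8 ^ m * A := hfin
        _ = (1 / 2 ^ m) * |iterDelta (g' + g') m f z'| + (m:ℝ) * 8 ^ m * c' * K * ‖g'‖ ^ α := by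
          rw [hA_def]; ring
    -- Iterated Marchaud step: doubling h until scale ~ r/j²
    have IT : ∀ L : ℕ, (2:ℝ) ^ L * ‖g‖ ≤ r / (j:ℝ) ^ 2 →
        |iterDelta g m f z| ≤ (1 / 2 ^ m) ^ L * |iterDelta ((2:ℝ) ^ L • g) m f z|
          + ((m:ℝ) * 8 ^ m * c') * K * ‖g‖ ^ α * ∑ l ∈ Finset.range L, q ^ l := by
      intro L
      induction L with
      | zero => intro _; simp
      | succ L ihL =>
        intro hL1
        have h2L0 : (0:ℝ) < 2 ^ L := by positivity
        have h2L : (2:ℝ) ^ L * ‖g‖ ≤ r / (j:ℝ) ^ 2 := by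
          refine le_trans ?_ hL1
          have : (2:ℝ) ^ L ≤ 2 ^ (L + 1) := pow_le_pow_right₀ one_le_two (by omega)
          exact mul_le_mul_of_nonneg_right this (norm_nonneg g)
        have hmain := ihL h2L
        have hnorm : ‖(2:ℝ) ^ L • g‖ = 2 ^ L * ‖g‖ := by
          rw [norm_smul, Real.norm_eq_abs, abs_of_nonneg (by positivity)]
        have hSS := SS ((2:ℝ) ^ L • g) (by rw [hnorm]; positivity) (by rw [hnorm]; exact h2L) z hz
        have hdb : (2:ℝ) ^ L • g + (2:ℝ) ^ L • g = (2:ℝ) ^ (L + 1) • g := by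
          rw [← add_smul]
          congr 1
          ring
        rw [hdb, hnorm] at hSS
        have hrw : ((2:ℝ) ^ L * ‖g‖) ^ α = ((2:ℝ) ^ α) ^ L * ‖g‖ ^ α := by
          rw [Real.mul_rpow (by positivity) (norm_nonneg g)]
          congr 1
          rw [← Real.rpow_natCast (2:ℝ) L, ← Real.rpow_mul (by norm_num : (0:ℝ) ≤ 2),
            mul_comm ((L:ℕ):ℝ) α, Real.rpow_mul (by norm_num : (0:ℝ) ≤ 2), Real.rpow_natCast]
        rw [hrw] at hSS
        have hp0 : (0:ℝ) ≤ (1 / 2 ^ m : ℝ) ^ L := by positivity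
        have step := mul_le_mul_of_nonneg_left hSS hp0
        have e : ((1:ℝ) / 2 ^ m) ^ L * ((2:ℝ) ^ α) ^ L = q ^ L := by
          rw [hq_def, ← mul_pow]
          congr 1
          ring
        calc |iterDelta g m f z|
            ≤ (1 / 2 ^ m) ^ L * |iterDelta ((2:ℝ) ^ L • g) m f z|
              + ((m:ℝ) * 8 ^ m * c') * K * ‖g‖ ^ α * ∑ l ∈ Finset.range L, q ^ l := hmain
          _ ≤ (1 / 2 ^ m) ^ L * ((1 / 2 ^ m) * |iterDelta ((2:ℝ) ^ (L + 1) • g) m f z|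
                + ((m:ℝ) * 8 ^ m * c') * K * (((2:ℝ) ^ α) ^ L * ‖g‖ ^ α))
              + ((m:ℝ) * 8 ^ m * c') * K * ‖g‖ ^ α * ∑ l ∈ Finset.range L, q ^ l := by
              have := mul_le_mul_of_nonneg_left hSS hp0
              linarith
          _ = (1 / 2 ^ m) ^ (L + 1) * |iterDelta ((2:ℝ) ^ (L + 1) • g) m f z|
              + ((m:ℝ) * 8 ^ m * c') * K * ‖g‖ ^ α * ∑ l ∈ Finset.range (L + 1), q ^ l := by
              rw [Finset.sum_range_succ, pow_succ, ← e]
              ring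
    -- choose the maximal L
    obtain ⟨L, hL1, hL2⟩ := exists_maximal_pow hg hgr
    have hit := IT L hL1
    have hnormL : ‖(2:ℝ) ^ L • g‖ = 2 ^ L * ‖g‖ := by
      rw [norm_smul, Real.norm_eq_abs, abs_of_nonneg (by positivity)]
    -- bound the top term by the sup of f
    have huL : |iterDelta ((2:ℝ) ^ L • g) m f z| ≤ 2 ^ m * M := by
      apply abs_iterDelta_le
      intro t ht
      apply hfM
      have ht' : (t:ℝ) ≤ (m:ℝ) := by exact_mod_cast ht
      have p1 : dist (z + (t:ℝ) • ((2:ℝ) ^ L • g)) x ≤ dist z x + (t:ℝ) * (2 ^ L * ‖g‖) := by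
        calc dist (z + (t:ℝ) • ((2:ℝ) ^ L • g)) x
            ≤ dist (z + (t:ℝ) • ((2:ℝ) ^ L • g)) z + dist z x := dist_triangle _ _ _
          _ = ‖(t:ℝ) • ((2:ℝ) ^ L • g)‖ + dist z x := by rw [dist_add_self_left']
          _ = (t:ℝ) * (2 ^ L * ‖g‖) + dist z x := by
              rw [norm_smul, hnormL, Real.norm_eq_abs, abs_of_nonneg (by positivity)]
          _ = dist z x + (t:ℝ) * (2 ^ L * ‖g‖) := by ring
      have p2 : (t:ℝ) * (2 ^ L * ‖g‖) ≤ (m:ℝ) * (r / (j:ℝ) ^ 2) := by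
        apply mul_le_mul ht' hL1 (by positivity) (by positivity)
      have p4 : (m:ℝ) * (r / (j:ℝ) ^ 2) ≤ r := by
        have hj2 : (m:ℝ) ≤ (j:ℝ) ^ 2 := by nlinarith
        have he : (j:ℝ) ^ 2 * (r / (j:ℝ) ^ 2) = r := by field_simp
        nlinarith
      have p5 : r * ((m:ℝ) - k) / j < r := by
        rw [div_lt_iff₀ hj0]
        nlinarith
      have hzx : dist z x ≤ r * k + r * ((m:ℝ) - k) / j := hz
      calc dist (z + (t:ℝ) • ((2:ℝ) ^ L • g)) x ≤ dist z x + (t:ℝ) * (2 ^ L * ‖g‖) := p1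
        _ ≤ (r * k + r * ((m:ℝ) - k) / j) + r := by linarith
        _ < r * k + r + r := by linarith
        _ = r * ((k:ℝ) + 2) := by ring
    -- bound (1/2^m)^L in terms of ‖g‖^α
    have ht0 : (0:ℝ) < (1 / 2 : ℝ) ^ L := by positivity
    have e1 : ((1:ℝ) / 2 ^ m) ^ L = (((1:ℝ) / 2) ^ L) ^ m := by
      have a1 : ((1:ℝ) / 2 ^ m) ^ L = 1 / 2 ^ (m * L) := by rw [div_pow, one_pow, ← pow_mul]
      have a2 : (((1:ℝ) / 2) ^ L) ^ m = 1 / 2 ^ (L * m) := by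
        rw [div_pow, one_pow, div_pow, one_pow, ← pow_mul]
      rw [a1, a2, Nat.mul_comm]
    have e3 : ((1:ℝ) / 2) ^ L ≤ 2 * (j:ℝ) ^ 2 * ‖g‖ / r := by
      rw [le_div_iff₀ hr]
      have hx : r < 2 ^ (L + 1) * ‖g‖ * (j:ℝ) ^ 2 := by
        have := (div_lt_iff₀ (by positivity : (0:ℝ) < (j:ℝ) ^ 2)).mp hL2
        linarith
      have hpow : ((1:ℝ) / 2) ^ L * 2 ^ L = 1 := by
        rw [← mul_pow]
        norm_num
      have hx2 : ((1:ℝ) / 2) ^ L * r < ((1:ℝ) / 2) ^ L * (2 ^ (L + 1) * ‖g‖ * (j:ℝ) ^ 2) :=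
        mul_lt_mul_of_pos_left hx ht0
      have hx3 : ((1:ℝ) / 2) ^ L * (2 ^ (L + 1) * ‖g‖ * (j:ℝ) ^ 2)
          = 2 * ‖g‖ * (j:ℝ) ^ 2 := by
        calc ((1:ℝ) / 2) ^ L * (2 ^ (L + 1) * ‖g‖ * (j:ℝ) ^ 2)
            = (((1:ℝ) / 2) ^ L * 2 ^ L) * (2 * ‖g‖ * (j:ℝ) ^ 2) := by rw [pow_succ]; ring
          _ = 2 * ‖g‖ * (j:ℝ) ^ 2 := by rw [hpow]; ring
      nlinarith
    have e2 : (((1:ℝ) / 2) ^ L) ^ m ≤ (((1:ℝ) / 2) ^ L) ^ α := by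
      rw [← Real.rpow_natCast (((1:ℝ) / 2) ^ L) m]
      apply Real.rpow_le_rpow_of_exponent_ge ht0
      · apply pow_le_one₀ (by norm_num) (by norm_num)
      · exact hαm.le
    have e4 : (((1:ℝ) / 2) ^ L) ^ α ≤ (2 * (j:ℝ) ^ 2 * ‖g‖ / r) ^ α :=
      Real.rpow_le_rpow ht0.le e3 hα.le
    have e5 : (2 * (j:ℝ) ^ 2 * ‖g‖ / r) ^ α = (2 * (j:ℝ) ^ 2) ^ α * ‖g‖ ^ α * r ^ (-α) := by
      rw [Real.div_rpow (by positivity) hr.le,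
        Real.mul_rpow (by positivity) (norm_nonneg g), Real.rpow_neg hr.le, div_eq_mul_inv]
    have hW : ((1:ℝ) / 2 ^ m) ^ L ≤ (2 * (j:ℝ) ^ 2) ^ α * ‖g‖ ^ α * r ^ (-α) := by
      rw [e1, ← e5]
      exact le_trans e2 e4
    have hfirst : ((1:ℝ) / 2 ^ m) ^ L * |iterDelta ((2:ℝ) ^ L • g) m f z|
        ≤ 2 ^ m * (2 * (j:ℝ) ^ 2) ^ α * (M * r ^ (-α)) * ‖g‖ ^ α := by
      have := mul_le_mul hW huL (abs_nonneg _) (by positivity)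
      calc ((1:ℝ) / 2 ^ m) ^ L * |iterDelta ((2:ℝ) ^ L • g) m f z|
          ≤ (2 * (j:ℝ) ^ 2) ^ α * ‖g‖ ^ α * r ^ (-α) * (2 ^ m * M) := this
        _ = 2 ^ m * (2 * (j:ℝ) ^ 2) ^ α * (M * r ^ (-α)) * ‖g‖ ^ α := by ring
    have hgeo : ∑ l ∈ Finset.range L, q ^ l ≤ γ := geom_sum_le_inv hq0 hq1 L
    have hsec : ((m:ℝ) * 8 ^ m * c') * K * ‖g‖ ^ α * ∑ l ∈ Finset.range L, q ^ l
        ≤ ((m:ℝ) * 8 ^ m * c') * K * ‖g‖ ^ α * γ := by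
      apply mul_le_mul_of_nonneg_left hgeo (by positivity)
    have hfirst2 : 2 ^ m * (2 * (j:ℝ) ^ 2) ^ α * (M * r ^ (-α)) * ‖g‖ ^ α
        ≤ 2 ^ m * (2 * (j:ℝ) ^ 2) ^ α * K * ‖g‖ ^ α := by
      have : M * r ^ (-α) ≤ K := by rw [hK_def]; linarith
      have h0 : (0:ℝ) ≤ 2 ^ m * (2 * (j:ℝ) ^ 2) ^ α := by positivity
      have := mul_le_mul_of_nonneg_left this h0
      exact mul_le_mul_of_nonneg_right (by linarith [this]) hga
    calc |iterDelta g m f z|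
        ≤ ((1:ℝ) / 2 ^ m) ^ L * |iterDelta ((2:ℝ) ^ L • g) m f z|
          + ((m:ℝ) * 8 ^ m * c') * K * ‖g‖ ^ α * ∑ l ∈ Finset.range L, q ^ l := hit
      _ ≤ 2 ^ m * (2 * (j:ℝ) ^ 2) ^ α * K * ‖g‖ ^ α
          + ((m:ℝ) * 8 ^ m * c') * K * ‖g‖ ^ α * γ :=
          add_le_add (le_trans hfirst hfirst2) hsec
      _ = (2 ^ m * (2 * (j:ℝ) ^ 2) ^ α + ((m:ℝ) * 8 ^ m * c') * γ) * K * ‖g‖ ^ α := by ring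

end Key

end AuxiliaryLemmas

/-- Lemma A.1(i): comparison of iterated differences of different orders,
`sup_{0<|h|≤r} |Δ_h^k f(x)|/|h|^α ≤ c r^{-α} ‖f‖_{∞,U}
  + c sup_{0<|h|≤r/j} sup_{z ∈ B(x,r(k+1))} |Δ_h^j f(z)|/|h|^α`
for `k = ⌊α⌋+1 ≤ j`, `x ∈ U` with `B(x, r(k+2)) ⊆ U`, where `c` depends only on `d`, `α`, `j`. -/
theorem iterDelta_order_comparison {d : ℕ} (hd : 1 ≤ d) (α : ℝ) (hα : 0 < α)
    (j : ℕ) (hj : ⌊α⌋₊ + 1 ≤ j) :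
    ∃ c : ℝ, 0 < c ∧ ∀ (U : Set (Ed d)), IsOpen U →
      ∀ f : Ed d → ℝ, ContinuousOn f U → (∃ M, ∀ z ∈ U, |f z| ≤ M) →
      ∀ r : ℝ, 0 < r → ∀ x ∈ U, Metric.ball x (r * ((⌊α⌋₊ + 1 : ℕ) + 2)) ⊆ U →
        (⨆ (h : Ed d) (_ : 0 < ‖h‖) (_ : ‖h‖ ≤ r),
            ENNReal.ofReal (|iterDelta h (⌊α⌋₊ + 1) f x| / ‖h‖ ^ α)) ≤
          ENNReal.ofReal (c * r ^ (-α)) * (⨆ z ∈ U, ENNReal.ofReal |f z|) +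
            ENNReal.ofReal c *
              ⨆ (h : Ed d) (_ : 0 < ‖h‖) (_ : ‖h‖ ≤ r / j)
                (z ∈ Metric.ball x (r * ((⌊α⌋₊ + 1 : ℕ) + 1))),
                ENNReal.ofReal (|iterDelta h j f z| / ‖h‖ ^ α) := by
  set k : ℕ := ⌊α⌋₊ + 1 with hk_def
  have hk1 : 1 ≤ k := by omega
  have hαk : α < (k:ℝ) := by
    rw [hk_def]
    push_cast
    exact Nat.lt_floor_add_one α
  have hkj : k ≤ j := hj
  have hj1 : 1 ≤ j := le_trans hk1 hkj
  have hj0 : (0:ℝ) < (j:ℝ) := by exact_mod_cast hj1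
  obtain ⟨c₀, hc₀, Hk⟩ := key_lemma (d := d) hα hk1 hαk hkj (j - k) (by omega)
  have hjk : j - (j - k) = k := by omega
  rw [hjk] at Hk
  have hj2α : (0:ℝ) < ((j:ℝ) ^ 2) ^ α := Real.rpow_pos_of_pos (pow_pos hj0 2) _
  have h2k0 : (0:ℝ) < (2:ℝ) ^ k := by positivity
  set c : ℝ := c₀ + 2 ^ k * ((j:ℝ) ^ 2) ^ α with hc_def
  have hc : 0 < c := by positivity
  refine ⟨c, hc, ?_⟩
  intro U hU f hf hbdd r hr x hxU hball
  obtain ⟨M₀, hM₀⟩ := hbdd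
  set S1 := ⨆ z ∈ U, ENNReal.ofReal |f z| with hS1_def
  set S2 := ⨆ (h : Ed d) (_ : 0 < ‖h‖) (_ : ‖h‖ ≤ r / j)
      (z ∈ Metric.ball x (r * ((k:ℕ) + 1))), ENNReal.ofReal (|iterDelta h j f z| / ‖h‖ ^ α)
    with hS2_def
  apply iSup_le; intro h; apply iSup_le; intro hh0; apply iSup_le; intro hhr
  by_cases hS2top : S2 = ⊤
  · rw [hS2top, ENNReal.mul_top (by simp [ENNReal.ofReal_eq_zero, not_le, hc]), add_top]
    exact le_top
  have hS1top : S1 ≠ ⊤ := by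
    refine ne_top_of_le_ne_top (ENNReal.ofReal_ne_top (r := M₀)) ?_
    refine iSup₂_le fun z hz => ?_
    exact ENNReal.ofReal_le_ofReal (hM₀ z hz)
  set M := S1.toReal with hM_def
  have hM : 0 ≤ M := ENNReal.toReal_nonneg
  have hMb : ∀ z ∈ U, |f z| ≤ M := by
    intro z hz
    have h1 : ENNReal.ofReal |f z| ≤ S1 := le_iSup_of_le z (le_iSup_of_le hz le_rfl)
    rw [← ENNReal.ofReal_toReal hS1top] at h1
    exact (ENNReal.ofReal_le_ofReal_iff hM).mp h1
  set b := S2.toReal with hb_def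
  have hb : 0 ≤ b := ENNReal.toReal_nonneg
  have hga : (0:ℝ) < ‖h‖ ^ α := Real.rpow_pos_of_pos hh0 α
  have hMr0 : (0:ℝ) ≤ M * r ^ (-α) := mul_nonneg hM (Real.rpow_nonneg hr.le _)
  have hjbound : ∀ (g z2 : Ed d), 0 < ‖g‖ → ‖g‖ ≤ r / j → dist z2 x < r * ((k:ℝ) + 1) →
      |iterDelta g j f z2| ≤ b * ‖g‖ ^ α := by
    intro g z2 hg1 hg2 hz2
    have hmem : z2 ∈ Metric.ball x (r * ((k:ℝ) + 1)) := by rwa [Metric.mem_ball]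
    have h1 : ENNReal.ofReal (|iterDelta g j f z2| / ‖g‖ ^ α) ≤ S2 :=
      le_iSup_of_le g (le_iSup_of_le hg1 (le_iSup_of_le hg2
        (le_iSup_of_le z2 (le_iSup_of_le hmem le_rfl))))
    have hgp : (0:ℝ) < ‖g‖ ^ α := Real.rpow_pos_of_pos hg1 α
    rw [← ENNReal.ofReal_toReal hS2top] at h1
    have h2 := (ENNReal.ofReal_le_ofReal_iff hb).mp h1
    rwa [div_le_iff₀ hgp] at h2
  have hfM : ∀ z2 : Ed d, dist z2 x < r * ((k:ℝ) + 2) → |f z2| ≤ M := by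
    intro z2 hz2
    exact hMb z2 (hball (by rwa [Metric.mem_ball]))
  have hmain : |iterDelta h k f x| ≤ c * (M * r ^ (-α) + b) * ‖h‖ ^ α := by
    rcases le_or_gt ‖h‖ (r / (j:ℝ) ^ 2) with hsmall | hbig
    · have hx0 : dist x x ≤ r * (k:ℝ) + r * ((k:ℝ) - (k:ℝ)) / j := by
        rw [dist_self]
        have e : r * ((k:ℝ) - (k:ℝ)) / j = 0 := by ring
        rw [e, add_zero]
        positivity
      have hres := Hk f M r b x hM hb hr hfM hjbound h x hh0 hsmall hx0
      refine le_trans hres ?_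
      have hcc : c₀ ≤ c := by
        rw [hc_def]
        nlinarith [hj2α, h2k0]
      have hKn : (0:ℝ) ≤ M * r ^ (-α) + b := by linarith
      have := mul_le_mul_of_nonneg_right hcc hKn
      exact mul_le_mul_of_nonneg_right this hga.le
    · have h2kM : |iterDelta h k f x| ≤ 2 ^ k * M := by
        apply abs_iterDelta_le
        intro t ht
        apply hfM
        have ht' : (t:ℝ) ≤ (k:ℝ) := by exact_mod_cast ht
        have p1 : dist (x + (t:ℝ) • h) x = (t:ℝ) * ‖h‖ := by
          rw [dist_add_self_left', norm_smul, Real.norm_eq_abs, abs_of_nonneg (by positivity)]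
        have hhr2 : (t:ℝ) * ‖h‖ ≤ (k:ℝ) * r :=
          mul_le_mul ht' hhr (norm_nonneg _) (by positivity)
        have hk2 : (k:ℝ) * r < r * ((k:ℝ) + 2) := by nlinarith
        rw [p1]
        linarith
      have hX : (1:ℝ) ≤ (j:ℝ) ^ 2 * ‖h‖ / r := by
        rw [le_div_iff₀ hr, one_mul]
        have := (div_lt_iff₀ (pow_pos hj0 2)).mp hbig
        linarith
      have hone : (1:ℝ) ≤ ((j:ℝ) ^ 2 * ‖h‖ / r) ^ α := by
        rw [← Real.one_rpow α]
        exact Real.rpow_le_rpow zero_le_one hX hα.le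
      have hXα : ((j:ℝ) ^ 2 * ‖h‖ / r) ^ α = ((j:ℝ) ^ 2) ^ α * ‖h‖ ^ α * r ^ (-α) := by
        rw [Real.div_rpow (by positivity) hr.le,
          Real.mul_rpow (by positivity) (norm_nonneg h), Real.rpow_neg hr.le, div_eq_mul_inv]
      calc |iterDelta h k f x| ≤ 2 ^ k * M := h2kM
        _ = 2 ^ k * M * 1 := by ring
        _ ≤ 2 ^ k * M * (((j:ℝ) ^ 2) ^ α * ‖h‖ ^ α * r ^ (-α)) := by
            rw [← hXα]
            exact mul_le_mul_of_nonneg_left hone (by positivity)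
        _ = (2 ^ k * ((j:ℝ) ^ 2) ^ α) * (M * r ^ (-α)) * ‖h‖ ^ α := by ring
        _ ≤ c * (M * r ^ (-α) + b) * ‖h‖ ^ α := by
            have h1 : 2 ^ k * ((j:ℝ) ^ 2) ^ α ≤ c := by
              rw [hc_def]
              linarith
            have h2 : M * r ^ (-α) ≤ M * r ^ (-α) + b := by linarith
            exact mul_le_mul_of_nonneg_right
              (mul_le_mul h1 h2 hMr0 hc.le) hga.le
  have hdiv : |iterDelta h k f x| / ‖h‖ ^ α ≤ c * M * r ^ (-α) + c * b := by
    rw [div_le_iff₀ hga]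
    calc |iterDelta h k f x| ≤ c * (M * r ^ (-α) + b) * ‖h‖ ^ α := hmain
      _ = (c * M * r ^ (-α) + c * b) * ‖h‖ ^ α := by ring
  calc ENNReal.ofReal (|iterDelta h k f x| / ‖h‖ ^ α)
      ≤ ENNReal.ofReal (c * M * r ^ (-α) + c * b) := ENNReal.ofReal_le_ofReal hdiv
    _ ≤ ENNReal.ofReal (c * M * r ^ (-α)) + ENNReal.ofReal (c * b) := ENNReal.ofReal_add_le
    _ = ENNReal.ofReal (c * r ^ (-α)) * ENNReal.ofReal M + ENNReal.ofReal c * ENNReal.ofReal b := by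
        rw [← ENNReal.ofReal_mul (by positivity : (0:ℝ) ≤ c * r ^ (-α)),
          ← ENNReal.ofReal_mul hc.le]
        congr 2
        ring
    _ = ENNReal.ofReal (c * r ^ (-α)) * S1 + ENNReal.ofReal c * S2 := by
        rw [hM_def, hb_def, ENNReal.ofReal_toReal hS1top, ENNReal.ofReal_toReal hS2top]

end
end

section
/- Let α > 0, set k := ⌊α⌋ + 1, and let j > k be an integer. There exists a constant C > 0 (depending only on α and j) such that for every bounded, twice continuously differentiable function g : (−k−2, k+2) → ℝ one has sup_{0<|t|≤1} |Δ_t^k g(0)|/|t|^α ≤ C sup_{s ∈ (−k−2,k+2)} |g(s)| + C sup_{0<|t|≤1/j} sup_{|y| ≤ k+1} |Δ_t^j g(y)|/|t|^α. -/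
open MeasureTheory ENNReal Metric Set Filter Topology

noncomputable section

set_option maxHeartbeats 1000000

namespace MarchaudAux


lemma iterDelta_succ_inner (h : ℝ) (n : ℕ) (f : ℝ → ℝ) :
    iterDelta h (n+1) f = iterDelta h n (deltaOp h f) :=
  Function.iterate_succ_apply _ _ _

lemma iterDelta_succ_outer (h : ℝ) (n : ℕ) (f : ℝ → ℝ) (y : ℝ) :
    iterDelta h (n+1) f y = iterDelta h n f (y + h) - iterDelta h n f y := by
  show ((deltaOp h)^[n+1] f) y = _
  rw [Function.iterate_succ_apply']
  rfl

lemma iterDelta_add_apply (h : ℝ) (a b : ℕ) (f : ℝ → ℝ) :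
    iterDelta h (a + b) f = iterDelta h a (iterDelta h b f) :=
  Function.iterate_add_apply _ _ _ _

lemma abs_iterDelta_le (h : ℝ) (n : ℕ) (f : ℝ → ℝ) (y M : ℝ)
    (H : ∀ i : ℕ, i ≤ n → |f (y + i*h)| ≤ M) :
    |iterDelta h n f y| ≤ 2^n * M := by
  induction n generalizing f M with
  | zero => simpa [iterDelta] using H 0 le_rfl
  | succ n ih =>
    rw [iterDelta_succ_inner]
    have key := ih (deltaOp h f) (2*M) ?_
    · calc |iterDelta h n (deltaOp h f) y| ≤ 2^n * (2*M) := key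
        _ = 2^(n+1) * M := by ring
    · intro i hi
      have h1 := H i (by omega)
      have h2 := H (i+1) (by omega)
      have e : y + (i:ℝ)*h + h = y + ((i+1 : ℕ) : ℝ)*h := by push_cast; ring
      calc |deltaOp h f (y + i*h)| = |f (y + i*h + h) - f (y + i*h)| := rfl
        _ ≤ |f (y + i*h + h)| + |f (y + i*h)| := abs_sub _ _
        _ ≤ M + M := by rw [e]; exact add_le_add h2 h1
        _ = 2*M := by ring

lemma iterDelta_neg (h : ℝ) (n : ℕ) (f : ℝ → ℝ) :
    ∀ y : ℝ, iterDelta (-h) n f y = (-1)^n * iterDelta h n f (y - n*h) := by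
  induction n with
  | zero => intro y; simp [iterDelta]
  | succ n ih =>
    intro y
    rw [iterDelta_succ_outer, iterDelta_succ_outer, ih, ih]
    have e1 : y + -h - (n:ℝ)*h = y - ((n+1 : ℕ) : ℝ)*h := by push_cast; ring
    have e2 : y - ((n+1 : ℕ) : ℝ)*h + h = y - (n:ℝ)*h := by push_cast; ring
    rw [e1, e2]
    ring



def Dl (h : ℝ) : Module.End ℝ (ℝ → ℝ) where
  toFun := deltaOp h
  map_add' f g := by funext x; simp [deltaOp]; ring
  map_smul' c f := by funext x; simp [deltaOp]; ring

lemma Dl_apply (h : ℝ) (f : ℝ → ℝ) : Dl h f = deltaOp h f := rfl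

lemma iterDelta_eq_pow (h : ℝ) (n : ℕ) (f : ℝ → ℝ) :
    iterDelta h n f = (Dl h ^ n) f := by
  rw [Module.End.pow_apply]; rfl

lemma Dl_double (h : ℝ) : Dl (2*h) = Dl h ^ 2 + (2:ℝ) • Dl h := by
  apply LinearMap.ext; intro f; funext x
  show deltaOp (2*h) f x = _
  simp only [LinearMap.add_apply, LinearMap.smul_apply, Pi.add_apply, Pi.smul_apply,
    smul_eq_mul, pow_succ, pow_zero, Module.End.mul_apply, Module.End.one_apply, Dl_apply,
    deltaOp]
  rw [show x + h + h = x + 2*h from by ring]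
  ring

lemma double_step (h : ℝ) (m : ℕ) (f : ℝ → ℝ) (y : ℝ) :
    iterDelta (2*h) m f y
      = ∑ i ∈ Finset.range (m+1), (m.choose i : ℝ) * 2^(m-i) * iterDelta h (m+i) f y := by
  have hc : Commute ((Dl h)^2) ((2:ℝ) • Dl h) :=
    ((Commute.refl (Dl h)).pow_left 2).smul_right 2
  have key : (Dl (2*h))^m
      = ∑ i ∈ Finset.range (m+1), ((m.choose i : ℝ) * 2^(m-i)) • (Dl h)^(m+i) := by
    rw [Dl_double, Commute.add_pow hc]
    refine Finset.sum_congr rfl fun i hi => ?_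
    have him : i ≤ m := Finset.mem_range_succ_iff.mp hi
    rw [smul_pow, ← pow_mul, mul_smul_comm, smul_mul_assoc]
    have hx : (Dl h)^(2*i) * (Dl h)^(m-i) = (Dl h)^(m+i) := by
      rw [← pow_add]; congr 1; omega
    rw [hx]
    have hy : (Dl h)^(m+i) * ((m.choose i : ℕ) : Module.End ℝ (ℝ → ℝ))
        = ((m.choose i : ℝ)) • (Dl h)^(m+i) := by
      rw [← (Nat.cast_commute (m.choose i) ((Dl h)^(m+i))).eq, ← nsmul_eq_mul,
        Nat.cast_smul_eq_nsmul ℝ]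
    rw [hy, smul_smul, mul_comm]
  have := congrArg (fun T : Module.End ℝ (ℝ → ℝ) => T f y) key
  simp only [LinearMap.sum_apply, Finset.sum_apply, LinearMap.smul_apply, Pi.smul_apply,
    smul_eq_mul] at this
  rw [iterDelta_eq_pow]
  show (Dl (2*h) ^ m) f y = _
  rw [this]
  exact Finset.sum_congr rfl fun i _ => by rw [← iterDelta_eq_pow]






lemma gridpt (j k : ℕ) (hj0 : (0:ℝ) < j) (y : ℝ) (hy : |y| ≤ (k:ℝ)) (r : ℕ) (s : ℝ)
    (hs : 0 < s) (hsj : s ≤ 1/(j:ℝ)) (hrj : r ≤ j) : |y + r*s| ≤ (k:ℝ)+1 := by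
  have h1 : (r:ℝ)*s ≤ 1 := by
    have hr : (r:ℝ) ≤ (j:ℝ) := by exact_mod_cast hrj
    have := mul_le_mul hr hsj hs.le (le_of_lt hj0)
    rwa [mul_one_div, div_self hj0.ne'] at this
  have h0 : (0:ℝ) ≤ (r:ℝ)*s := by positivity
  calc |y + r*s| ≤ |y| + |(r:ℝ)*s| := abs_add_le _ _
    _ = |y| + (r:ℝ)*s := by rw [abs_of_nonneg h0]
    _ ≤ (k:ℝ) + 1 := add_le_add hy h1

lemma marchaud (α : ℝ) (j k : ℕ) (hα : 0 < α) (hk : α < (k:ℝ)) (hkj : k < j) :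
    ∀ d : ℕ, ∃ D : ℝ, 0 < D ∧ ∀ (g : ℝ → ℝ) (M A : ℝ), 0 ≤ M → 0 ≤ A →
      (∀ x : ℝ, |x| ≤ (k:ℝ)+1 → |g x| ≤ M) →
      (∀ s : ℝ, 0 < s → s ≤ 1/(j:ℝ) → ∀ y : ℝ, |y| ≤ (k:ℝ)+1 → |iterDelta s j g y| ≤ A * s^α) →
      ∀ p : ℕ, j ≤ p + d → k ≤ p → p ≤ j →
      ∀ s : ℝ, 0 < s → s ≤ 1/(j:ℝ) → ∀ y : ℝ, |y| ≤ (k:ℝ) →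
      |iterDelta s p g y| ≤ D * (M+A) * s^α := by
  have hk0 : (0:ℝ) < k := hα.trans hk
  have hj0 : (0:ℝ) < j := by
    have : (k:ℝ) < j := by exact_mod_cast hkj
    linarith
  intro d
  induction d with
  | zero =>
    refine ⟨1, one_pos, ?_⟩
    intro g M A hM hA Hg HA p hpd hkp hpj s hs hsj y hy
    have hpj' : p = j := by omega
    subst hpj'
    have h1 := HA s hs hsj y (by linarith)
    have hsα : 0 ≤ s^α := Real.rpow_nonneg hs.le α
    have : (1:ℝ)*(M+A)*s^α = A*s^α + M*s^α := by ring
    rw [this]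
    nlinarith [mul_nonneg hM hsα]
  | succ d IH =>
    obtain ⟨D', hD', IH⟩ := IH
    have h2k : (0:ℝ) < 2^k := by positivity
    set θ : ℝ := (2:ℝ)^α / 2^k with hθdef
    have hθ1 : θ < 1 := by
      rw [hθdef, div_lt_one h2k]
      have h2 : (2:ℝ)^α < (2:ℝ)^(k:ℝ) :=
        (Real.rpow_lt_rpow_left_iff (by norm_num)).mpr hk
      rwa [Real.rpow_natCast] at h2
    have hθ0 : 0 ≤ θ := by positivity
    set Γ : ℝ := (j:ℝ) * 4^j * (D' + 2^j) with hΓdef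
    have hΓpos : 0 < Γ := by positivity
    set N : ℝ := 2^j * (2*(j:ℝ))^α + Γ with hNdef
    have hNpos : 0 < N := by positivity
    have h1θ : 0 < 1 - θ := by linarith
    set D0 : ℝ := N / (1 - θ) with hD0def
    have hD0pos : 0 < D0 := by positivity
    have hD0N : N ≤ D0 := by
      rw [hD0def, le_div_iff₀ h1θ]; nlinarith
    refine ⟨D0 + D', by positivity, ?_⟩
    intro g M A hM hA Hg HA p hpd hkp hpj s hs hsj y hy
    have hMA : 0 ≤ M + A := by linarith
    by_cases hcase : j ≤ p + d
    · have h1 := IH g M A hM hA Hg HA p hcase hkp hpj s hs hsj y hy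
      have h2 : 0 ≤ (M+A)*s^α := by positivity
      nlinarith
    · have hm : p + d + 1 = j := by omega
      have hpltj : p < j := by omega
      -- bound for all higher levels p+1+i, i < p, at the same point
      have higher : ∀ (i : ℕ), i < p → ∀ s : ℝ, 0 < s → s ≤ 1/(j:ℝ) → ∀ y : ℝ, |y| ≤ (k:ℝ) →
          |iterDelta s (p+1+i) g y| ≤ (D' + 2^j) * (M+A) * s^α := by
        intro i hi s hs hsj y hy
        have hsα : (0:ℝ) ≤ s^α := Real.rpow_nonneg hs.le α
        by_cases hij : p+1+i ≤ j
        · have h1 := IH g M A hM hA Hg HA (p+1+i) (by omega) (by omega) hij s hs hsj y hy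
          have h2j : (0:ℝ) < 2^j := by positivity
          nlinarith [mul_nonneg (le_of_lt h2j) (mul_nonneg hMA hsα)]
        · set q := p + 1 + i - j with hqdef
          have hqe : p+1+i = q + j := by omega
          have hqj : q ≤ j := by omega
          rw [hqe, iterDelta_add_apply]
          have grid : ∀ r : ℕ, r ≤ q → |iterDelta s j g (y + r*s)| ≤ A * s^α := by
            intro r hr
            exact HA s hs hsj _ (gridpt j k hj0 y hy r s hs hsj (hr.trans hqj))
          have h1 := abs_iterDelta_le s q (iterDelta s j g) y (A*s^α) grid
          have h2q : (2:ℝ)^q ≤ 2^j := pow_le_pow_right₀ (by norm_num) hqj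
          have h2q0 : (0:ℝ) < 2^q := by positivity
          have hA1 : A*s^α ≤ (M+A)*s^α := mul_le_mul_of_nonneg_right (by linarith) hsα
          have h2D : (2:ℝ)^j ≤ D'+2^j := by linarith
          calc |iterDelta s q (iterDelta s j g) y| ≤ 2^q * (A*s^α) := h1
            _ ≤ 2^j * (A*s^α) := mul_le_mul_of_nonneg_right h2q (by positivity)
            _ ≤ (D'+2^j) * ((M+A)*s^α) :=
                mul_le_mul h2D hA1 (by positivity) (by linarith)
            _ = (D' + 2^j) * (M+A) * s^α := by ring
      -- crude bound at comparable scales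
      have base : ∀ s : ℝ, 0 < s → s ≤ 1/(j:ℝ) → 1/(j:ℝ) < 2*s → ∀ y : ℝ, |y| ≤ (k:ℝ) →
          |iterDelta s p g y| ≤ 2^j * (2*(j:ℝ))^α * (M+A) * s^α := by
        intro s hs hsj h2s y hy
        have grid : ∀ i : ℕ, i ≤ p → |g (y + i*s)| ≤ M := by
          intro i hi
          exact Hg _ (gridpt j k hj0 y hy i s hs hsj (by omega))
        have h1 := abs_iterDelta_le s p g y M grid
        have h2js : (1:ℝ) ≤ 2*(j:ℝ)*s := by
          rw [div_lt_iff₀ hj0] at h2s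
          nlinarith
        have h2 : (1:ℝ) ≤ (2*(j:ℝ)*s)^α := by
          calc (1:ℝ) = (1:ℝ)^α := (Real.one_rpow α).symm
            _ ≤ (2*(j:ℝ)*s)^α := Real.rpow_le_rpow (by norm_num) h2js hα.le
        have h3 : (2*(j:ℝ)*s)^α = (2*(j:ℝ))^α * s^α := Real.mul_rpow (by positivity) hs.le
        have hsα : (0:ℝ) ≤ s^α := Real.rpow_nonneg hs.le α
        have h2p : (2:ℝ)^p ≤ 2^j := pow_le_pow_right₀ (by norm_num) hpltj.le
        have h2p0 : (0:ℝ) < 2^p := by positivity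
        have hjα : (0:ℝ) ≤ (2*(j:ℝ))^α := Real.rpow_nonneg (by positivity) α
        calc |iterDelta s p g y| ≤ 2^p * M := h1
          _ ≤ 2^p * M * (2*(j:ℝ)*s)^α := by nlinarith [mul_nonneg (le_of_lt h2p0) hM]
          _ = 2^p * M * ((2*(j:ℝ))^α * s^α) := by rw [h3]
          _ ≤ 2^j * (2*(j:ℝ))^α * (M+A) * s^α := by
              nlinarith [mul_nonneg hM (mul_nonneg hjα hsα), mul_nonneg hA (mul_nonneg hjα hsα),
                mul_nonneg hjα hsα]
      have hbaseD0 : 2^j * (2*(j:ℝ))^α ≤ D0 := by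
        calc (2:ℝ)^j * (2*(j:ℝ))^α ≤ N := by rw [hNdef]; linarith
          _ ≤ D0 := hD0N
      -- scale induction
      have scale : ∀ n : ℕ, ∀ s : ℝ, 0 < s → s ≤ 1/(j:ℝ) → 1/(j:ℝ) < 2^(n+1)*s →
          ∀ y : ℝ, |y| ≤ (k:ℝ) → |iterDelta s p g y| ≤ D0 * (M+A) * s^α := by
        intro n
        induction n with
        | zero =>
          intro s hs hsj hn y hy
          have hn' : 1/(j:ℝ) < 2*s := by
            rw [pow_one] at hn; exact hn
          have h1 := base s hs hsj hn' y hy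
          have hsα : (0:ℝ) ≤ s^α := Real.rpow_nonneg hs.le α
          nlinarith [mul_nonneg hMA hsα]
        | succ n ihn =>
          intro s hs hsj hn y hy
          have hsα : (0:ℝ) ≤ s^α := Real.rpow_nonneg hs.le α
          by_cases h2s : 1/(j:ℝ) < 2*s
          · have h1 := base s hs hsj h2s y hy
            nlinarith [mul_nonneg hMA hsα]
          · push_neg at h2s
            have hkey := double_step s p g y
            rw [Finset.sum_range_succ'] at hkey
            have hz : (p.choose 0 : ℝ) * 2^(p-0) * iterDelta s (p+0) g y
                = 2^p * iterDelta s p g y := by simp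
            rw [hz] at hkey
            have hdouble := ihn (2*s) (by positivity) h2s
              (by rw [show (2:ℝ)^(n+1)*(2*s) = 2^(n+1+1)*s from by ring]; exact hn)
              y hy
            have hsum : |∑ i ∈ Finset.range p,
                (p.choose (i+1) : ℝ) * 2^(p-(i+1)) * iterDelta s (p+(i+1)) g y|
                ≤ (j:ℝ) * 4^j * ((D'+2^j) * (M+A) * s^α) := by
              have hterm : ∀ i ∈ Finset.range p,
                  |(p.choose (i+1) : ℝ) * 2^(p-(i+1)) * iterDelta s (p+(i+1)) g y|
                  ≤ 4^j * ((D'+2^j) * (M+A) * s^α) := by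
                intro i hi
                have hip : i < p := Finset.mem_range.mp hi
                have hc1 : (p.choose (i+1) : ℝ) ≤ 2^p := by
                  have hnat : p.choose (i+1) ≤ 2^p := by
                    rw [← Nat.sum_range_choose p]
                    exact Finset.single_le_sum (f := fun r => p.choose r)
                      (fun r _ => Nat.zero_le _) (Finset.mem_range.mpr (by omega))
                  calc (p.choose (i+1) : ℝ) ≤ ((2^p : ℕ) : ℝ) := by exact_mod_cast hnat
                    _ = 2^p := by push_cast; ring
                have hc2 : (2:ℝ)^(p-(i+1)) ≤ 2^p := pow_le_pow_right₀ (by norm_num) (by omega)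
                have hc0 : (0:ℝ) ≤ (p.choose (i+1) : ℝ) := by positivity
                have hc20 : (0:ℝ) < (2:ℝ)^(p-(i+1)) := by positivity
                have hI : |iterDelta s (p+(i+1)) g y| ≤ (D'+2^j) * (M+A) * s^α := by
                  rw [show p+(i+1) = p+1+i from by omega]
                  exact higher i hip s hs hsj y hy
                have hIpos : (0:ℝ) ≤ (D'+2^j) * (M+A) * s^α := by positivity
                have h2p : (2:ℝ)^p ≤ 2^j := pow_le_pow_right₀ (by norm_num) hpltj.le
                have h4 : (2:ℝ)^p * 2^p ≤ 4^j := by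
                  have h0 : (0:ℝ) ≤ 2^p := by positivity
                  calc (2:ℝ)^p * 2^p ≤ 2^j * 2^j :=
                      mul_le_mul h2p h2p h0 (by positivity)
                    _ = 4^j := by rw [← mul_pow]; norm_num
                calc |(p.choose (i+1) : ℝ) * 2^(p-(i+1)) * iterDelta s (p+(i+1)) g y|
                    = (p.choose (i+1) : ℝ) * 2^(p-(i+1)) * |iterDelta s (p+(i+1)) g y| := by
                      rw [abs_mul, abs_of_nonneg (by positivity : (0:ℝ) ≤ (p.choose (i+1):ℝ) * 2^(p-(i+1)))]
                  _ ≤ 2^p * 2^p * ((D'+2^j) * (M+A) * s^α) := by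
                      apply mul_le_mul _ hI (abs_nonneg _) (by positivity)
                      exact mul_le_mul hc1 hc2 hc20.le (by positivity)
                  _ ≤ 4^j * ((D'+2^j) * (M+A) * s^α) :=
                      mul_le_mul_of_nonneg_right h4 hIpos
              calc |∑ i ∈ Finset.range p,
                  (p.choose (i+1) : ℝ) * 2^(p-(i+1)) * iterDelta s (p+(i+1)) g y|
                  ≤ ∑ i ∈ Finset.range p, |(p.choose (i+1) : ℝ) * 2^(p-(i+1)) * iterDelta s (p+(i+1)) g y| :=
                    Finset.abs_sum_le_sum_abs _ _
                _ ≤ ∑ _i ∈ Finset.range p, 4^j * ((D'+2^j) * (M+A) * s^α) :=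
                    Finset.sum_le_sum hterm
                _ = (p:ℝ) * (4^j * ((D'+2^j) * (M+A) * s^α)) := by
                    rw [Finset.sum_const, Finset.card_range, nsmul_eq_mul]
                _ ≤ (j:ℝ) * 4^j * ((D'+2^j) * (M+A) * s^α) := by
                    have hpj' : (p:ℝ) ≤ (j:ℝ) := by exact_mod_cast hpltj.le
                    have h0 : (0:ℝ) ≤ 4^j * ((D'+2^j) * (M+A) * s^α) := by positivity
                    calc (p:ℝ) * (4^j * ((D'+2^j) * (M+A) * s^α))
                        ≤ (j:ℝ) * (4^j * ((D'+2^j) * (M+A) * s^α)) :=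
                          mul_le_mul_of_nonneg_right hpj' h0
                      _ = (j:ℝ) * 4^j * ((D'+2^j) * (M+A) * s^α) := by ring
            -- assemble
            have h2p0 : (0:ℝ) < 2^p := by positivity
            have habs : (2:ℝ)^p * |iterDelta s p g y|
                ≤ |iterDelta (2*s) p g y| + |∑ i ∈ Finset.range p,
                    (p.choose (i+1) : ℝ) * 2^(p-(i+1)) * iterDelta s (p+(i+1)) g y| := by
              have e : (2:ℝ)^p * iterDelta s p g y
                  = iterDelta (2*s) p g y - ∑ i ∈ Finset.range p,
                    (p.choose (i+1) : ℝ) * 2^(p-(i+1)) * iterDelta s (p+(i+1)) g y := by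
                linarith [hkey]
              calc (2:ℝ)^p * |iterDelta s p g y| = |(2:ℝ)^p * iterDelta s p g y| := by
                    rw [abs_mul, abs_of_pos h2p0]
                _ = |iterDelta (2*s) p g y - _| := by rw [e]
                _ ≤ _ := abs_sub _ _
            have h2α : ((2:ℝ)*s)^α = (2:ℝ)^α * s^α := Real.mul_rpow (by norm_num) hs.le
            rw [h2α] at hdouble
            -- key numeric inequality : D0 * 2^α + Γ ≤ 2^p * D0
            have hnum : D0 * (2:ℝ)^α + Γ ≤ 2^p * D0 := by
              have h2kp : (2:ℝ)^k ≤ 2^p := pow_le_pow_right₀ (by norm_num) hkp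
              have hθp : (2:ℝ)^α = θ * 2^k := by
                rw [hθdef]; field_simp
              have hΓN : Γ ≤ N := by
                have h0 : (0:ℝ) ≤ 2^j * (2*(j:ℝ))^α :=
                  mul_nonneg (by positivity) (Real.rpow_nonneg (by positivity) α)
                rw [hNdef]; linarith
              have hND0 : N = D0 * (1-θ) := by
                rw [hD0def]; field_simp
              have h2p1 : (1:ℝ) ≤ 2^p := by
                calc (1:ℝ) = 2^0 := by norm_num
                  _ ≤ 2^p := pow_le_pow_right₀ (by norm_num) (Nat.zero_le p)
              have e1 : D0 * (2:ℝ)^α = D0 * θ * 2^k := by rw [hθp]; ring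
              have hint1 : D0 * θ * 2^k ≤ D0 * θ * 2^p :=
                mul_le_mul_of_nonneg_left h2kp (by positivity)
              have hint2 : (0:ℝ) ≤ D0 * (2^p - 1) * (1 - θ) :=
                mul_nonneg (mul_nonneg hD0pos.le (by linarith)) h1θ.le
              nlinarith [hint1, hint2, hΓN, hND0]
            -- conclude
            have final : (2:ℝ)^p * |iterDelta s p g y| ≤ 2^p * (D0 * (M+A) * s^α) := by
              calc (2:ℝ)^p * |iterDelta s p g y|
                  ≤ |iterDelta (2*s) p g y| + _ := habs
                _ ≤ D0 * (M+A) * ((2:ℝ)^α * s^α) + (j:ℝ) * 4^j * ((D'+2^j) * (M+A) * s^α) :=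
                    add_le_add hdouble hsum
                _ = (D0 * (2:ℝ)^α + Γ) * ((M+A) * s^α) := by rw [hΓdef]; ring
                _ ≤ (2^p * D0) * ((M+A) * s^α) :=
                    mul_le_mul_of_nonneg_right hnum (mul_nonneg hMA hsα)
                _ = 2^p * (D0 * (M+A) * s^α) := by ring
            exact le_of_mul_le_mul_left final h2p0
      -- conclude for all s
      obtain ⟨n, hn⟩ := exists_nat_gt (1/((j:ℝ)*s))
      have hscale : 1/(j:ℝ) < 2^(n+1)*s := by
        have h1 : (n:ℝ) ≤ 2^(n+1) := by
          have := Nat.lt_two_pow_self (n := n)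
          have h2 : (n:ℝ) < (2:ℝ)^n := by exact_mod_cast this
          have h3 : (2:ℝ)^n ≤ 2^(n+1) := pow_le_pow_right₀ (by norm_num) (by omega)
          linarith
        have h2 : 1/(j:ℝ) < (n:ℝ)*s := by
          rw [div_lt_iff₀ hj0]
          rw [div_lt_iff₀ (by positivity : (0:ℝ) < (j:ℝ)*s)] at hn
          nlinarith
        nlinarith
      have h1 := scale n s hs hsj hscale y hy
      have hsα : (0:ℝ) ≤ s^α := Real.rpow_nonneg hs.le α
      have expand : (D0+D') * (M+A) * s^α = D0*(M+A)*s^α + D'*((M+A)*s^α) := by ring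
      rw [expand]
      have h0 : (0:ℝ) ≤ D'*((M+A)*s^α) := mul_nonneg hD'.le (mul_nonneg hMA hsα)
      linarith


end MarchaudAux

open MarchaudAux in
/-- inequality (A.3) in the appendix: one-dimensional comparison of iterated
differences. For `α > 0`, `k = ⌊α⌋ + 1 < j`, there is `C > 0` (depending only on `α`, `j`) such
that for every bounded `C^2` function `g : (−k−2, k+2) → ℝ`,
`sup_{0<|t|≤1} |Δ_t^k g(0)|/|t|^α ≤ C sup |g| + C sup_{0<|t|≤1/j} sup_{|y|≤k+1} |Δ_t^j g(y)|/|t|^α`. -/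
theorem one_dim_iterDelta_comparison (α : ℝ) (hα : 0 < α) (j : ℕ) (hj : ⌊α⌋₊ + 1 < j) :
    ∃ C : ℝ, 0 < C ∧ ∀ g : ℝ → ℝ,
      ContDiffOn ℝ 2 g (Set.Ioo (-((⌊α⌋₊ : ℝ) + 3)) ((⌊α⌋₊ : ℝ) + 3)) →
      (∃ M, ∀ s ∈ Set.Ioo (-((⌊α⌋₊ : ℝ) + 3)) ((⌊α⌋₊ : ℝ) + 3), |g s| ≤ M) →
      (⨆ (t : ℝ) (_ : 0 < |t|) (_ : |t| ≤ 1),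
          ENNReal.ofReal (|iterDelta t (⌊α⌋₊ + 1) g 0| / |t| ^ α)) ≤
        ENNReal.ofReal C *
            (⨆ s ∈ Set.Ioo (-((⌊α⌋₊ : ℝ) + 3)) ((⌊α⌋₊ : ℝ) + 3), ENNReal.ofReal |g s|) +
          ENNReal.ofReal C *
            ⨆ (t : ℝ) (_ : 0 < |t|) (_ : |t| ≤ 1 / j) (y : ℝ) (_ : |y| ≤ (⌊α⌋₊ : ℝ) + 2),
              ENNReal.ofReal (|iterDelta t j g y| / |t| ^ α) := by
  set k : ℕ := ⌊α⌋₊ + 1 with hkdef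
  have hk : α < (k:ℝ) := by
    rw [hkdef]; push_cast; exact Nat.lt_floor_add_one α
  have hkj : k < j := hj
  have hk0 : (0:ℝ) < k := hα.trans hk
  have hj0 : (0:ℝ) < j := by
    have : (k:ℝ) < j := by exact_mod_cast hkj
    linarith
  have hj1 : (1:ℝ) ≤ j := by
    have : (1:ℕ) ≤ j := by omega
    exact_mod_cast this
  have hjα : (0:ℝ) ≤ (j:ℝ)^α := Real.rpow_nonneg hj0.le α
  have hcast1 : (⌊α⌋₊ : ℝ) + 2 = (k:ℝ) + 1 := by rw [hkdef]; push_cast; ring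
  obtain ⟨D, hD, hmar⟩ := marchaud α j k hα hk hkj (j - k)
  set C : ℝ := D + 2^k * (j:ℝ)^α + 1 with hCdef
  have hCpos : 0 < C := by positivity
  refine ⟨C, hCpos, ?_⟩
  intro g _hg hbdd
  obtain ⟨M₀, hM₀⟩ := hbdd
  set SG := ⨆ s ∈ Set.Ioo (-((⌊α⌋₊ : ℝ) + 3)) ((⌊α⌋₊ : ℝ) + 3), ENNReal.ofReal |g s| with hSGdef
  set SB := ⨆ (t : ℝ) (_ : 0 < |t|) (_ : |t| ≤ 1 / (j:ℕ)) (y : ℝ) (_ : |y| ≤ (⌊α⌋₊ : ℝ) + 2),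
      ENNReal.ofReal (|iterDelta t j g y| / |t| ^ α) with hSBdef
  by_cases hSB : SB = ⊤
  · rw [hSB, ENNReal.mul_top (ENNReal.ofReal_pos.mpr hCpos).ne', add_top]
    exact le_top
  -- finiteness of SG
  have hSGle : SG ≤ ENNReal.ofReal M₀ := by
    rw [hSGdef]
    exact iSup₂_le fun s hs => ENNReal.ofReal_le_ofReal (hM₀ s hs)
  have hSGtop : SG ≠ ⊤ := (hSGle.trans_lt ENNReal.ofReal_lt_top).ne
  set M : ℝ := SG.toReal with hMdef
  have hM : 0 ≤ M := ENNReal.toReal_nonneg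
  set A : ℝ := SB.toReal with hAdef
  have hA : 0 ≤ A := ENNReal.toReal_nonneg
  -- pointwise bounds
  have hgM : ∀ x : ℝ, |x| ≤ (k:ℝ)+1 → |g x| ≤ M := by
    intro x hx
    rw [← hcast1] at hx
    have hx' := abs_le.mp hx
    have hmem : x ∈ Set.Ioo (-((⌊α⌋₊:ℝ)+3)) ((⌊α⌋₊:ℝ)+3) :=
      ⟨by linarith [hx'.1], by linarith [hx'.2]⟩
    have h1 : ENNReal.ofReal |g x| ≤ SG := by
      rw [hSGdef]
      exact le_iSup₂ (f := fun s (_ : s ∈ Set.Ioo (-((⌊α⌋₊:ℝ)+3)) ((⌊α⌋₊:ℝ)+3)) =>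
        ENNReal.ofReal |g s|) x hmem
    have h2 := ENNReal.toReal_mono hSGtop h1
    rwa [ENNReal.toReal_ofReal (abs_nonneg _)] at h2
  have hHA : ∀ s : ℝ, 0 < s → s ≤ 1/(j:ℝ) → ∀ y : ℝ, |y| ≤ (k:ℝ)+1 →
      |iterDelta s j g y| ≤ A * s^α := by
    intro s hs hsj y hy
    have habs : |s| = s := abs_of_pos hs
    have h1 : ENNReal.ofReal (|iterDelta s j g y| / |s|^α) ≤ SB := by
      rw [hSBdef]
      refine le_iSup_of_le s (le_iSup_of_le (by rw [habs]; exact hs)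
        (le_iSup_of_le (by rw [habs]; exact hsj)
          (le_iSup_of_le y (le_iSup_of_le (by rw [hcast1]; exact hy) le_rfl))))
    have h2 := ENNReal.toReal_mono hSB h1
    rw [ENNReal.toReal_ofReal (by positivity)] at h2
    rw [habs] at h2
    have hsα : 0 < s^α := Real.rpow_pos_of_pos hs α
    calc |iterDelta s j g y| = |iterDelta s j g y| / s^α * s^α := by field_simp
      _ ≤ A * s^α := mul_le_mul_of_nonneg_right h2 hsα.le
  -- the real-variable bound
  have key : ∀ t : ℝ, 0 < |t| → |t| ≤ 1 → |iterDelta t k g 0| / |t|^α ≤ C*M + C*A := by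
    intro t h0t h1t
    have htα : 0 < |t|^α := Real.rpow_pos_of_pos h0t α
    by_cases hts : |t| ≤ 1/(j:ℝ)
    · -- small scale : use marchaud
      have hmain : |iterDelta t k g 0| ≤ D * (M+A) * |t|^α := by
        have ht0 : t ≠ 0 := by intro h; rw [h] at h0t; simp at h0t
        rcases ht0.lt_or_gt with htn | htp
        · -- t < 0
          have hts' : t = -|t| := by rw [abs_of_neg htn]; ring
          have heq := iterDelta_neg |t| k g 0
          have h2 : |iterDelta t k g 0| = |iterDelta |t| k g (0 - k*|t|)| := by
            conv_lhs => rw [hts']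
            rw [heq, abs_mul, abs_pow, abs_neg, abs_one, one_pow, one_mul]
          rw [h2]
          apply hmar g M A hM hA hgM hHA k (by omega) le_rfl hkj.le |t| h0t hts
          rw [zero_sub, abs_neg]
          have h3 : abs ((k:ℝ) * |t|) = (k:ℝ) * |t| := abs_of_nonneg (by positivity)
          rw [h3]
          calc (k:ℝ) * |t| ≤ (k:ℝ) * 1 := by
                have h1j : 1/(j:ℝ) ≤ 1 := by
                  rw [div_le_one hj0]; exact hj1
                have := hts.trans h1j
                exact mul_le_mul_of_nonneg_left this hk0.le
            _ = (k:ℝ) := mul_one _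
        · -- t > 0
          have habs : |t| = t := abs_of_pos htp
          rw [habs]
          apply hmar g M A hM hA hgM hHA k (by omega) le_rfl hkj.le t htp (by rwa [habs] at hts)
          simp [hk0.le]
      rw [div_le_iff₀ htα]
      calc |iterDelta t k g 0| ≤ D * (M+A) * |t|^α := hmain
        _ = (D*M + D*A) * |t|^α := by ring
        _ ≤ (C*M + C*A) * |t|^α := by
            have hDC : D ≤ C := by
              have h0 : (0:ℝ) ≤ 2^k * (j:ℝ)^α := mul_nonneg (by positivity) hjα
              rw [hCdef]; linarith
            have : D*M + D*A ≤ C*M + C*A :=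
              add_le_add (mul_le_mul_of_nonneg_right hDC hM) (mul_le_mul_of_nonneg_right hDC hA)
            exact mul_le_mul_of_nonneg_right this htα.le
    · -- large scale : crude bound
      push_neg at hts
      have grid : ∀ i : ℕ, i ≤ k → |g (0 + i*t)| ≤ M := by
        intro i hi
        apply hgM
        rw [zero_add, abs_mul, Nat.abs_cast]
        calc (i:ℝ) * |t| ≤ (k:ℝ) * 1 := by
              apply mul_le_mul (by exact_mod_cast hi) h1t (abs_nonneg t) hk0.le
          _ ≤ (k:ℝ) + 1 := by linarith
      have h1 := abs_iterDelta_le t k g 0 M grid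
      have hone : (1:ℝ) ≤ (j:ℝ)^α * |t|^α := by
        have hjt : (1:ℝ) ≤ (j:ℝ) * |t| := by
          rw [div_lt_iff₀ hj0] at hts
          nlinarith
        calc (1:ℝ) = (1:ℝ)^α := (Real.one_rpow α).symm
          _ ≤ ((j:ℝ) * |t|)^α := Real.rpow_le_rpow (by norm_num) hjt hα.le
          _ = (j:ℝ)^α * |t|^α := Real.mul_rpow hj0.le (abs_nonneg t)
      rw [div_le_iff₀ htα]
      calc |iterDelta t k g 0| ≤ 2^k * M := h1
        _ ≤ 2^k * M * ((j:ℝ)^α * |t|^α) := by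
            nlinarith [mul_nonneg (show (0:ℝ) ≤ 2^k by positivity) hM]
        _ = (2^k * (j:ℝ)^α * M) * |t|^α := by ring
        _ ≤ (C*M + C*A) * |t|^α := by
            have h2 : 2^k * (j:ℝ)^α * M ≤ C * M := by
              apply mul_le_mul_of_nonneg_right _ hM
              rw [hCdef]; linarith
            have h3 : 0 ≤ C*A := by positivity
            exact mul_le_mul_of_nonneg_right (by linarith) htα.le
  -- assemble in ℝ≥0∞
  calc (⨆ (t : ℝ) (_ : 0 < |t|) (_ : |t| ≤ 1),
        ENNReal.ofReal (|iterDelta t k g 0| / |t| ^ α))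
      ≤ ENNReal.ofReal (C*M + C*A) := by
        refine iSup_le fun t => iSup_le fun h1 => iSup_le fun h2 => ?_
        exact ENNReal.ofReal_le_ofReal (key t h1 h2)
    _ = ENNReal.ofReal (C*M) + ENNReal.ofReal (C*A) :=
        ENNReal.ofReal_add (by positivity) (by positivity)
    _ = ENNReal.ofReal C * ENNReal.ofReal M + ENNReal.ofReal C * ENNReal.ofReal A := by
        rw [ENNReal.ofReal_mul hCpos.le, ENNReal.ofReal_mul hCpos.le]
    _ = ENNReal.ofReal C * SG + ENNReal.ofReal C * SB := by
        rw [hMdef, hAdef, ENNReal.ofReal_toReal hSGtop, ENNReal.ofReal_toReal hSB]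

end
end

section
/- Let α ∈ (1,2). There exists a constant C > 0 (depending only on α) such that for every bounded, twice continuously differentiable function g : (−3,3) → ℝ one has |g′(0)| ≤ C sup_{s ∈ (−3,3)} |g(s)| + C sup_{0<|t|≤1/2} sup_{|y|≤2} |Δ_t^2 g(y)|/|t|^α. -/
open MeasureTheory ENNReal Metric Set Filter Topology

noncomputable section

lemma core_bound (α : ℝ) (hα1 : 1 < α) (g : ℝ → ℝ) (G S : ℝ) (hS0 : 0 ≤ S)
    (hd : HasDerivAt g (deriv g 0) 0)
    (hG : ∀ s ∈ Set.Ioo (-3:ℝ) 3, |g s| ≤ G)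
    (hS : ∀ t : ℝ, 0 < t → t ≤ 1/2 → |g (2*t) - 2 * g t + g 0| ≤ S * t ^ α) :
    |deriv g 0| ≤ 4 * G + S/2 * (1 - (1/2:ℝ)^(α-1))⁻¹ := by
  set r : ℝ := (1/2:ℝ)^(α-1) with hr
  have hr0 : 0 < r := Real.rpow_pos_of_pos (by norm_num) _
  have hr1 : r < 1 := Real.rpow_lt_one (by norm_num) (by norm_num) (by linarith)
  set u : ℕ → ℝ := fun n => (1/2:ℝ)^(n+1) with hu
  have hupos : ∀ n, 0 < u n := fun n => by positivity
  set D : ℕ → ℝ := fun n => (g (u n) - g 0) / u n with hD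
  have hstep : ∀ n, dist (D n) (D (n+1)) ≤ S/2 * r ^ n := by
    intro n
    set t : ℝ := u (n+1) with htdef
    have ht0 : 0 < t := hupos (n+1)
    have hun : u n = 2 * t := by
      simp only [htdef, hu]
      rw [pow_succ]
      ring
    have ht12 : t ≤ 1/2 := by
      simp only [htdef, hu]
      calc ((1:ℝ)/2)^(n+1+1) ≤ (1/2)^1 := by
            apply pow_le_pow_of_le_one (by norm_num) (by norm_num); omega
        _ = 1/2 := by norm_num
    have hdiff : D n - D (n+1) = (g (2*t) - 2 * g t + g 0) / (2*t) := by
      simp only [hD, hun, ← htdef]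
      field_simp
      ring
    have h1 : dist (D n) (D (n+1)) = |g (2*t) - 2 * g t + g 0| / (2*t) := by
      rw [Real.dist_eq, hdiff, abs_div, abs_of_pos (show (0:ℝ) < 2*t by linarith)]
    rw [h1]
    have h2 : |g (2*t) - 2 * g t + g 0| ≤ S * t ^ α := hS t ht0 ht12
    have h3 : |g (2*t) - 2 * g t + g 0| / (2*t) ≤ S * t ^ α / (2*t) := by
      apply div_le_div_of_nonneg_right h2 (by linarith) |>.trans_eq rfl
    refine h3.trans ?_
    have h4 : S * t ^ α / (2*t) = S/2 * t ^ (α-1) := by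
      rw [Real.rpow_sub ht0, Real.rpow_one]
      field_simp
    rw [h4]
    have h5 : t ^ (α - 1) = r ^ (n+2) := by
      have : t = (1/2:ℝ)^((n+2 : ℕ) : ℝ) := by
        rw [Real.rpow_natCast]
      rw [this, ← Real.rpow_natCast r (n+2), hr, ← Real.rpow_mul (by norm_num),
        ← Real.rpow_mul (by norm_num), mul_comm]
    rw [h5]
    have h6 : r ^ (n+2) ≤ r ^ n := pow_le_pow_of_le_one hr0.le hr1.le (by omega)
    nlinarith [pow_nonneg hr0.le n, pow_nonneg hr0.le (n+2)]
  have hsum : Summable (fun n : ℕ => S/2 * r ^ n) :=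
    (summable_geometric_of_lt_one hr0.le hr1).mul_left _
  have hu0 : Tendsto u atTop (𝓝 0) := by
    have h := tendsto_pow_atTop_nhds_zero_of_lt_one (by norm_num : (0:ℝ) ≤ 1/2) (by norm_num)
    exact h.comp (tendsto_add_atTop_nat 1)
  have huin : Tendsto u atTop (𝓝[≠] (0:ℝ)) := by
    apply tendsto_nhdsWithin_of_tendsto_nhds_of_eventually_within _ hu0
    exact Eventually.of_forall fun n => (hupos n).ne'
  have hDlim : Tendsto D atTop (𝓝 (deriv g 0)) := by
    have hslope := hasDerivAt_iff_tendsto_slope.mp hd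
    have : Tendsto (fun n => slope g 0 (u n)) atTop (𝓝 (deriv g 0)) := hslope.comp huin
    convert this using 1
    ext n
    simp [hD, slope_def_field]
  have hdist : dist (D 0) (deriv g 0) ≤ ∑' n, S/2 * r ^ n :=
    dist_le_tsum_of_dist_le_of_tendsto₀ _ hstep hsum hDlim
  have htsum : ∑' n : ℕ, S/2 * r ^ n = S/2 * (1-r)⁻¹ := by
    rw [tsum_mul_left, tsum_geometric_of_lt_one hr0.le hr1]
  rw [htsum] at hdist
  have hD0 : |D 0| ≤ 4 * G := by
    have hg1 : |g (u 0)| ≤ G := hG _ (by constructor <;> simp [hu] <;> norm_num)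
    have hg0 : |g 0| ≤ G := hG 0 (by norm_num)
    have : u 0 = 1/2 := by simp [hu]
    simp only [hD, this]
    rw [abs_div, abs_of_pos (by norm_num : (0:ℝ) < 1/2)]
    rw [this] at hg1
    calc |g (1/2) - g 0| / (1/2) ≤ (G + G) / (1/2) := by
          apply div_le_div_of_nonneg_right _ (by norm_num)
          calc |g (1/2) - g 0| ≤ |g (1/2)| + |g 0| := abs_sub _ _
            _ ≤ G + G := add_le_add hg1 hg0
      _ = 4 * G := by ring
  calc |deriv g 0| = |D 0 + (deriv g 0 - D 0)| := by ring_nf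
    _ ≤ |D 0| + |deriv g 0 - D 0| := abs_add_le _ _
    _ = |D 0| + dist (D 0) (deriv g 0) := by rw [Real.dist_eq, abs_sub_comm]
    _ ≤ 4 * G + S/2 * (1 - r)⁻¹ := add_le_add hD0 hdist

/-- inequality (A.6) in the appendix: for `α ∈ (1,2)` there is `C > 0`
(depending only on `α`) such that for every bounded `C^2` function `g : (−3,3) → ℝ`,
`|g′(0)| ≤ C sup_{(−3,3)} |g| + C sup_{0<|t|≤1/2} sup_{|y|≤2} |Δ_t^2 g(y)|/|t|^α`. -/
theorem deriv_bound_by_second_differences (α : ℝ) (hα : α ∈ Set.Ioo (1 : ℝ) 2) :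
    ∃ C : ℝ, 0 < C ∧ ∀ g : ℝ → ℝ,
      ContDiffOn ℝ 2 g (Set.Ioo (-3 : ℝ) 3) →
      (∃ M, ∀ s ∈ Set.Ioo (-3 : ℝ) 3, |g s| ≤ M) →
      ENNReal.ofReal |deriv g 0| ≤
        ENNReal.ofReal C * (⨆ s ∈ Set.Ioo (-3 : ℝ) 3, ENNReal.ofReal |g s|) +
          ENNReal.ofReal C *
            ⨆ (t : ℝ) (_ : 0 < |t|) (_ : |t| ≤ 1 / 2) (y : ℝ) (_ : |y| ≤ 2),
              ENNReal.ofReal (|iterDelta t 2 g y| / |t| ^ α) := by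
  obtain ⟨hα1, hα2⟩ := hα
  set r : ℝ := (1/2:ℝ)^(α-1) with hrdef
  have hr0 : 0 < r := Real.rpow_pos_of_pos (by norm_num) _
  have hr1 : r < 1 := Real.rpow_lt_one (by norm_num) (by norm_num) (by linarith)
  have hinv : 0 < (1 - r)⁻¹ := inv_pos.mpr (by linarith)
  refine ⟨4 + (1 - r)⁻¹, by linarith, fun g hg _ => ?_⟩
  set C : ℝ := 4 + (1 - r)⁻¹ with hCdef
  have hC : 0 < C := by rw [hCdef]; linarith
  set A := ⨆ s ∈ Set.Ioo (-3:ℝ) 3, ENNReal.ofReal |g s| with hAdef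
  set B := ⨆ (t : ℝ) (_ : 0 < |t|) (_ : |t| ≤ 1 / 2) (y : ℝ) (_ : |y| ≤ 2),
      ENNReal.ofReal (|iterDelta t 2 g y| / |t| ^ α) with hBdef
  by_cases hA : A = ⊤
  · rw [hA, ENNReal.mul_top (by simp [ENNReal.ofReal_eq_zero]; linarith)]
    simp
  by_cases hB : B = ⊤
  · rw [hB, ENNReal.mul_top (by simp [ENNReal.ofReal_eq_zero]; linarith)]
    simp
  set G := A.toReal with hGdef
  set S := B.toReal with hSdef
  have hGnn : 0 ≤ G := ENNReal.toReal_nonneg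
  have hSnn : 0 ≤ S := ENNReal.toReal_nonneg
  have hGb : ∀ s ∈ Set.Ioo (-3:ℝ) 3, |g s| ≤ G := by
    intro s hs
    have h1 : ENNReal.ofReal |g s| ≤ A := by
      rw [hAdef]
      exact le_iSup₂ (f := fun s (_ : s ∈ Set.Ioo (-3:ℝ) 3) => ENNReal.ofReal |g s|) s hs
    calc |g s| = (ENNReal.ofReal |g s|).toReal := (ENNReal.toReal_ofReal (abs_nonneg _)).symm
      _ ≤ G := ENNReal.toReal_mono hA h1
  have hSb : ∀ t : ℝ, 0 < t → t ≤ 1/2 → |g (2*t) - 2 * g t + g 0| ≤ S * t ^ α := by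
    intro t ht0 ht12
    have habs : |t| = t := abs_of_pos ht0
    have hiter : iterDelta t 2 g 0 = g (2*t) - 2 * g t + g 0 := by
      simp only [iterDelta, Function.iterate_succ, Function.iterate_zero, Function.comp_apply,
        id_eq, deltaOp]
      ring_nf
    have h1 : ENNReal.ofReal (|iterDelta t 2 g 0| / |t| ^ α) ≤ B := by
      rw [hBdef]
      apply le_iSup_of_le t
      apply le_iSup_of_le (by rw [habs]; exact ht0)
      apply le_iSup_of_le (by rw [habs]; exact ht12)
      apply le_iSup_of_le (0:ℝ)
      exact le_iSup_of_le (by norm_num) le_rfl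
    have hpow : (0:ℝ) < |t| ^ α := Real.rpow_pos_of_pos (abs_pos.mpr ht0.ne') α
    have h2 : |iterDelta t 2 g 0| / |t| ^ α ≤ S := by
      calc |iterDelta t 2 g 0| / |t| ^ α
          = (ENNReal.ofReal (|iterDelta t 2 g 0| / |t| ^ α)).toReal :=
            (ENNReal.toReal_ofReal (by positivity)).symm
        _ ≤ S := ENNReal.toReal_mono hB h1
    rw [div_le_iff₀ hpow, hiter, habs] at h2
    exact h2
  have hd : HasDerivAt g (deriv g 0) 0 :=
    ((hg.contDiffAt (Ioo_mem_nhds (by norm_num) (by norm_num))).differentiableAt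
      (by norm_num)).hasDerivAt
  have hcore := core_bound α hα1 g G S hSnn hd hGb hSb
  have hreal : |deriv g 0| ≤ C * G + C * S := by
    rw [hCdef]
    nlinarith [mul_nonneg hinv.le hGnn, mul_nonneg hinv.le hSnn]
  calc ENNReal.ofReal |deriv g 0| ≤ ENNReal.ofReal (C * G + C * S) :=
        ENNReal.ofReal_le_ofReal hreal
    _ = ENNReal.ofReal (C * G) + ENNReal.ofReal (C * S) :=
        ENNReal.ofReal_add (by positivity) (by positivity)
    _ = ENNReal.ofReal C * ENNReal.ofReal G + ENNReal.ofReal C * ENNReal.ofReal S := by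
        rw [ENNReal.ofReal_mul hC.le, ENNReal.ofReal_mul hC.le]
    _ = ENNReal.ofReal C * A + ENNReal.ofReal C * B := by
        rw [hGdef, hSdef, ENNReal.ofReal_toReal hA, ENNReal.ofReal_toReal hB]

end
end

section
/- Let d ≥ 1, α ∈ (0,3), ε ∈ (0,α), ϱ > 0 and δ ∈ (0, 1/4]. For every bounded function f : ℝ^d → ℝ one has |f|_{B(0,2),α−ε,ϱ} ≤ δ |f|_{B(0,2),α,ϱ} + 8 · 2^ϱ · δ^{−α/ε} ‖f‖_∞, where for σ ∈ (0,3) and κ > 0 the seminorm is |f|_{B(0,2),σ,κ} := sup_{x ∈ B(0,2)} sup_{0<|h| ≤ r_x/4} r_x^{κ+σ} |Δ_h^3 f(x)|/|h|^σ with r_x := 2 − |x| the distance of x to the complement of B(0,2). -/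
open MeasureTheory ENNReal Metric Set Filter Topology

noncomputable section

/-- The weighted seminorm `|f|_{B(0,2),σ,κ}` from (3.10): with `r_x = 2 - |x|`,
`|f|_{B(0,2),σ,κ} = sup_{x ∈ B(0,2)} sup_{0<|h|≤r_x/4} r_x^{κ+σ} |Δ_h^3 f(x)|/|h|^σ`. -/
def weightedSeminorm {d : ℕ} (σ κ : ℝ) (f : Ed d → ℝ) : ℝ≥0∞ :=
  ⨆ (x : Ed d) (_ : ‖x‖ < 2) (h : Ed d) (_ : 0 < ‖h‖) (_ : ‖h‖ ≤ (2 - ‖x‖) / 4),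
    ENNReal.ofReal ((2 - ‖x‖) ^ (κ + σ) * |iterDelta h 3 f x| / ‖h‖ ^ σ)

lemma iterDelta_three {E : Type*} [Add E] (h : E) (f : E → ℝ) (x : E) :
    iterDelta h 3 f x = f (x + h + h + h) - 3 * f (x + h + h) + 3 * f (x + h) - f x := by
  show (deltaOp h)^[3] f x = _
  simp only [Function.iterate_succ, Function.iterate_zero, Function.comp_apply, id_eq, deltaOp]
  ring

lemma ofReal_iterDelta_le {d : ℕ} (h : Ed d) (f : Ed d → ℝ) (x : Ed d) :
    ENNReal.ofReal |iterDelta h 3 f x| ≤ 8 * ⨆ z, ENNReal.ofReal |f z| := by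
  have hle : ∀ z, ENNReal.ofReal |f z| ≤ ⨆ z, ENNReal.ofReal |f z| :=
    fun z => le_iSup (fun z => ENNReal.ofReal |f z|) z
  have habs : |iterDelta h 3 f x| ≤
      |f (x + h + h + h)| + (3 * |f (x + h + h)| + (3 * |f (x + h)| + |f x|)) := by
    rw [iterDelta_three]
    have h1 := abs_nonneg (f (x + h + h + h))
    rw [abs_le]
    constructor <;>
      nlinarith [le_abs_self (f (x + h + h + h)), neg_abs_le (f (x + h + h + h)),
        le_abs_self (f (x + h + h)), neg_abs_le (f (x + h + h)),
        le_abs_self (f (x + h)), neg_abs_le (f (x + h)),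
        le_abs_self (f x), neg_abs_le (f x)]
  calc ENNReal.ofReal |iterDelta h 3 f x|
      ≤ ENNReal.ofReal (|f (x + h + h + h)| + (3 * |f (x + h + h)| + (3 * |f (x + h)| + |f x|))) :=
        ENNReal.ofReal_le_ofReal habs
    _ ≤ ENNReal.ofReal |f (x + h + h + h)| +
          (ENNReal.ofReal (3 * |f (x + h + h)|) +
            (ENNReal.ofReal (3 * |f (x + h)|) + ENNReal.ofReal |f x|)) := by
        refine le_trans ENNReal.ofReal_add_le (add_le_add_right ?_ _)
        refine le_trans ENNReal.ofReal_add_le (add_le_add_right ?_ _)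
        exact ENNReal.ofReal_add_le
    _ = ENNReal.ofReal |f (x + h + h + h)| +
          (3 * ENNReal.ofReal |f (x + h + h)| +
            (3 * ENNReal.ofReal |f (x + h)| + ENNReal.ofReal |f x|)) := by
        rw [ENNReal.ofReal_mul (by norm_num), ENNReal.ofReal_mul (by norm_num),
          ENNReal.ofReal_ofNat]
    _ ≤ (⨆ z, ENNReal.ofReal |f z|) +
          (3 * (⨆ z, ENNReal.ofReal |f z|) +
            (3 * (⨆ z, ENNReal.ofReal |f z|) + ⨆ z, ENNReal.ofReal |f z|)) := by
        gcongr <;> exact hle _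
    _ = 8 * ⨆ z, ENNReal.ofReal |f z| := by ring

lemma interp_case1 {α ε ϱ δ r t A : ℝ} (hr : 0 < r) (ht : 0 < t) (hA : 0 ≤ A)
    (hc : t ^ ε ≤ δ * r ^ ε) :
    r ^ (ϱ + (α - ε)) * A / t ^ (α - ε) ≤ δ * (r ^ (ϱ + α) * A / t ^ α) := by
  have eq1 : r ^ (ϱ + (α - ε)) * A / t ^ (α - ε)
      = (t ^ ε / r ^ ε) * (r ^ (ϱ + α) * A / t ^ α) := by
    rw [Real.rpow_add hr, Real.rpow_add hr, Real.rpow_sub hr, Real.rpow_sub ht]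
    have h1 := Real.rpow_pos_of_pos hr ε
    have h2 := Real.rpow_pos_of_pos ht ε
    have h3 := Real.rpow_pos_of_pos ht α
    field_simp
  rw [eq1]
  have hfr : t ^ ε / r ^ ε ≤ δ := (div_le_iff₀ (Real.rpow_pos_of_pos hr ε)).mpr hc
  exact mul_le_mul_of_nonneg_right hfr (by positivity)

lemma interp_case2 {α ε ϱ δ r t A : ℝ} (hε0 : 0 < ε) (hεα : ε < α)
    (hϱ : 0 < ϱ) (hδ0 : 0 < δ) (hδ1 : δ ≤ 1) (hr : 0 < r) (hr2 : r ≤ 2) (ht : 0 < t)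
    (hA : 0 ≤ A) (hc : δ * r ^ ε < t ^ ε) :
    r ^ (ϱ + (α - ε)) * A / t ^ (α - ε) ≤ 2 ^ ϱ * δ ^ (-α / ε) * A := by
  have hαε : 0 < α - ε := by linarith
  have hδε : δ < (t / r) ^ ε := by
    rw [Real.div_rpow ht.le hr.le, lt_div_iff₀ (Real.rpow_pos_of_pos hr ε)]
    exact hc
  have h1 : δ ^ (1 / ε) < t / r := by
    have hh := Real.rpow_lt_rpow hδ0.le hδε (one_div_pos.mpr hε0)
    rwa [← Real.rpow_mul (div_nonneg ht.le hr.le), mul_one_div_cancel hε0.ne',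
      Real.rpow_one] at hh
  have h2 : r / t < δ ^ (-(1 / ε)) := by
    rw [Real.rpow_neg hδ0.le, ← inv_div t r]
    exact inv_strictAnti₀ (Real.rpow_pos_of_pos hδ0 _) h1
  have h3 : (r / t) ^ (α - ε) ≤ δ ^ (-α / ε) := by
    calc (r / t) ^ (α - ε) ≤ (δ ^ (-(1 / ε))) ^ (α - ε) :=
          Real.rpow_le_rpow (by positivity) h2.le hαε.le
      _ = δ ^ (-(1 / ε) * (α - ε)) := (Real.rpow_mul hδ0.le _ _).symm
      _ ≤ δ ^ (-α / ε) := by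
          apply Real.rpow_le_rpow_of_exponent_ge hδ0 hδ1
          have he : -(1 / ε) * (α - ε) = (ε - α) / ε := by field_simp; ring
          rw [he, div_le_div_iff₀ hε0 hε0]
          nlinarith
  have eq2 : r ^ (ϱ + (α - ε)) * A / t ^ (α - ε) = r ^ ϱ * ((r / t) ^ (α - ε) * A) := by
    rw [Real.rpow_add hr, Real.div_rpow hr.le ht.le]
    have h1 := Real.rpow_pos_of_pos ht (α - ε)
    field_simp
  rw [eq2]
  calc r ^ ϱ * ((r / t) ^ (α - ε) * A) ≤ 2 ^ ϱ * (δ ^ (-α / ε) * A) := by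
        apply mul_le_mul (Real.rpow_le_rpow hr.le hr2 hϱ.le)
          (mul_le_mul_of_nonneg_right h3 hA) (by positivity) (by positivity)
    _ = 2 ^ ϱ * δ ^ (-α / ε) * A := by ring

/-- inequality (3.13): interpolation estimate for the weighted seminorms,
`|f|_{B(0,2),α−ε,ϱ} ≤ δ |f|_{B(0,2),α,ϱ} + 8 · 2^ϱ · δ^{−α/ε} ‖f‖_∞`
for `α ∈ (0,3)`, `ε ∈ (0,α)`, `ϱ > 0` and `δ ∈ (0,1/4]`. -/
theorem weighted_seminorm_interpolation {d : ℕ} (hd : 1 ≤ d) (α ε ϱ δ : ℝ)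
    (hα : α ∈ Set.Ioo (0 : ℝ) 3) (hε : ε ∈ Set.Ioo (0 : ℝ) α) (hϱ : 0 < ϱ)
    (hδ : δ ∈ Set.Ioc (0 : ℝ) (1 / 4)) (f : Ed d → ℝ) (hf : ∃ M, ∀ z, |f z| ≤ M) :
    weightedSeminorm (α - ε) ϱ f ≤
      ENNReal.ofReal δ * weightedSeminorm α ϱ f +
        ENNReal.ofReal (8 * 2 ^ ϱ * δ ^ (-α / ε)) * ⨆ z, ENNReal.ofReal |f z| := by
  obtain ⟨hα0, hα3⟩ := hα
  obtain ⟨hε0, hεα⟩ := hε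
  obtain ⟨hδ0, hδ4⟩ := hδ
  rw [weightedSeminorm]
  refine iSup_le fun x => iSup_le fun hx => iSup_le fun h => iSup_le fun hh =>
    iSup_le fun hhr => ?_
  have hr0 : (0 : ℝ) < 2 - ‖x‖ := by linarith
  have hr2 : 2 - ‖x‖ ≤ 2 := by linarith [norm_nonneg x]
  have hA : (0 : ℝ) ≤ |iterDelta h 3 f x| := abs_nonneg _
  by_cases hcase : ‖h‖ ^ ε ≤ δ * (2 - ‖x‖) ^ ε
  · refine le_trans ?_ le_self_add
    calc ENNReal.ofReal ((2 - ‖x‖) ^ (ϱ + (α - ε)) * |iterDelta h 3 f x| / ‖h‖ ^ (α - ε))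
        ≤ ENNReal.ofReal (δ * ((2 - ‖x‖) ^ (ϱ + α) * |iterDelta h 3 f x| / ‖h‖ ^ α)) :=
          ENNReal.ofReal_le_ofReal (interp_case1 hr0 hh hA hcase)
      _ = ENNReal.ofReal δ *
            ENNReal.ofReal ((2 - ‖x‖) ^ (ϱ + α) * |iterDelta h 3 f x| / ‖h‖ ^ α) :=
          ENNReal.ofReal_mul hδ0.le
      _ ≤ ENNReal.ofReal δ * weightedSeminorm α ϱ f := by
          refine mul_le_mul_right ?_ _
          rw [weightedSeminorm]
          exact le_iSup_of_le x (le_iSup_of_le hx (le_iSup_of_le h (le_iSup_of_le hh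
            (le_iSup_of_le hhr le_rfl))))
  · push_neg at hcase
    refine le_trans ?_ le_add_self
    have hδ1 : δ ≤ 1 := by linarith
    calc ENNReal.ofReal ((2 - ‖x‖) ^ (ϱ + (α - ε)) * |iterDelta h 3 f x| / ‖h‖ ^ (α - ε))
        ≤ ENNReal.ofReal (2 ^ ϱ * δ ^ (-α / ε) * |iterDelta h 3 f x|) :=
          ENNReal.ofReal_le_ofReal (interp_case2 hε0 hεα hϱ hδ0 hδ1 hr0 hr2 hh hA hcase)
      _ = ENNReal.ofReal (2 ^ ϱ * δ ^ (-α / ε)) * ENNReal.ofReal |iterDelta h 3 f x| :=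
          ENNReal.ofReal_mul (by positivity)
      _ ≤ ENNReal.ofReal (2 ^ ϱ * δ ^ (-α / ε)) * (8 * ⨆ z, ENNReal.ofReal |f z|) :=
          mul_le_mul_right (ofReal_iterDelta_le h f x) _
      _ = ENNReal.ofReal (8 * 2 ^ ϱ * δ ^ (-α / ε)) * ⨆ z, ENNReal.ofReal |f z| := by
          rw [show (8 : ℝ) * 2 ^ ϱ * δ ^ (-α / ε) = 8 * (2 ^ ϱ * δ ^ (-α / ε)) by ring,
            ENNReal.ofReal_mul (show (0:ℝ) ≤ 8 by norm_num), ENNReal.ofReal_ofNat]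
          ring

end
end

section
/- Let d ≥ 1 and let (μ_t)_{t ∈ (0,1]} be a family of Borel probability measures on ℝ^d such that for every δ > 0, μ_t({y : |y| > δ}) → 0 as t → 0, and such that each μ_t is absolutely continuous with respect to Lebesgue measure. Let U ⊆ ℝ^d be open, and let f : ℝ^d → ℝ be bounded and Borel measurable with lim_{t→0} ∫_{ℝ^d} f(x+y) μ_t(dy) = f(x) for every x ∈ U. If f̃ : U → ℝ is bounded and continuous and f = f̃ Lebesgue-almost everywhere on U, then f(x) = f̃(x) for every x ∈ U; in particular, the restriction of f to U is continuous. -/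
open MeasureTheory ENNReal Metric Set Filter Topology

noncomputable section

/-- Lemma 3.5, measure-theoretic form: if `(μ_t)_{t ∈ (0,1]}` are absolutely
continuous probability measures with `μ_t({|y| > δ}) → 0` as `t → 0`, `f` is bounded measurable
with `∫ f(x+y) μ_t(dy) → f(x)` for all `x ∈ U`, and `f̃` is bounded continuous on `U` with
`f = f̃` a.e. on `U`, then `f = f̃` everywhere on `U`; in particular `f` is continuous on `U`. -/
theorem ae_modification_is_everywhere {d : ℕ} (hd : 1 ≤ d)
    (μ : ℝ → Measure (Ed d))
    (hprob : ∀ t ∈ Set.Ioc (0 : ℝ) 1, IsProbabilityMeasure (μ t))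
    (htight : ∀ δ : ℝ, 0 < δ →
      Filter.Tendsto (fun t => μ t {y : Ed d | δ < ‖y‖}) (𝓝[>] (0 : ℝ)) (𝓝 0))
    (hac : ∀ t ∈ Set.Ioc (0 : ℝ) 1, μ t ≪ volume)
    (U : Set (Ed d)) (hU : IsOpen U)
    (f : Ed d → ℝ) (hfm : Measurable f) (hfb : ∃ M, ∀ x, |f x| ≤ M)
    (hconv : ∀ x ∈ U,
      Filter.Tendsto (fun t => ∫ y, f (x + y) ∂(μ t)) (𝓝[>] (0 : ℝ)) (𝓝 (f x)))
    (ftilde : Ed d → ℝ) (hcont : ContinuousOn ftilde U)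
    (hbdd : ∃ M, ∀ x ∈ U, |ftilde x| ≤ M)
    (hae : ∀ᵐ x ∂(volume.restrict U), f x = ftilde x) :
    (∀ x ∈ U, f x = ftilde x) ∧ ContinuousOn f U := by
  obtain ⟨M, hM⟩ := hfb
  have hM0 : 0 ≤ M := le_trans (abs_nonneg _) (hM 0)
  set N : Set (Ed d) := {z | f z ≠ ftilde z} ∩ U with hN
  have hNvol : volume N = 0 := by
    have h := hae
    rw [ae_iff, Measure.restrict_apply' hU.measurableSet] at h
    exact h
  have key : ∀ x ∈ U, f x = ftilde x := by
    intro x hx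
    have hconv2 : Tendsto (fun t => ∫ y, f (x + y) ∂(μ t)) (𝓝[>] (0:ℝ)) (𝓝 (ftilde x)) := by
      rw [Metric.tendsto_nhds]
      intro ε hε
      set C : ℝ := M + |ftilde x| + 1 with hC
      have hC0 : 0 < C := by positivity
      have hCge : M + |ftilde x| ≤ C := by simp [hC]
      have hcx : ContinuousAt ftilde x := hcont.continuousAt (hU.mem_nhds hx)
      obtain ⟨δ₁, hδ₁, hδ₁'⟩ := Metric.continuousAt_iff.mp hcx (ε/2) (by positivity)
      obtain ⟨δ₂, hδ₂, hδ₂'⟩ := Metric.isOpen_iff.mp hU x hx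
      set δ : ℝ := min δ₁ δ₂ / 2 with hδdef
      have hδ0 : 0 < δ := by positivity
      have hδlt : δ < min δ₁ δ₂ := by
        have : 0 < min δ₁ δ₂ := lt_min hδ₁ hδ₂
        linarith
      have hball : ∀ y : Ed d, ‖y‖ ≤ δ → x + y ∈ U ∧ dist (x + y) x < δ₁ := by
        intro y hy
        have hd : dist (x + y) x = ‖y‖ := by simp [dist_eq_norm]
        have hlt : ‖y‖ < min δ₁ δ₂ := lt_of_le_of_lt hy hδlt
        refine ⟨hδ₂' ?_, ?_⟩
        · rw [Metric.mem_ball, hd]; exact hlt.trans_le (min_le_right _ _)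
        · rw [hd]; exact hlt.trans_le (min_le_left _ _)
      set s : Set (Ed d) := {y : Ed d | δ < ‖y‖} with hs_def
      have hs : MeasurableSet s := measurableSet_lt measurable_const measurable_norm
      have hsmall : ∀ᶠ t in 𝓝[>] (0:ℝ), μ t s < ENNReal.ofReal (ε/(2*C)) :=
        (htight δ hδ0).eventually_lt_const (by
          exact ENNReal.ofReal_pos.mpr (by positivity))
      have hIoc : ∀ᶠ t in 𝓝[>] (0:ℝ), t ∈ Set.Ioc (0:ℝ) 1 :=
        Ioc_mem_nhdsGT_of_mem ⟨le_refl 0, zero_lt_one⟩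
      filter_upwards [hsmall, hIoc] with t ht1 ht2
      haveI := hprob t ht2
      have hacμ := hac t ht2
      have hNμ : μ t {y : Ed d | x + y ∈ N} = 0 := by
        apply hacμ
        have : volume ((fun y : Ed d => x + y) ⁻¹' N) = 0 := by
          rw [measure_preimage_add]; exact hNvol
        exact this
      have haeN : ∀ᵐ y ∂(μ t), x + y ∉ N := by
        rw [ae_iff]
        simpa using hNμ
      have hfint : Integrable (fun y => f (x + y)) (μ t) := by
        refine (integrable_const M).mono' ((hfm.comp (measurable_const_add x)).aestronglyMeasurable) ?_
        exact Eventually.of_forall fun y => by simpa using hM (x + y)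
      set g : Ed d → ℝ := fun y => ε/2 + s.indicator (fun _ => C) y with hg
      have hgint : Integrable g (μ t) := (integrable_const _).add ((integrable_const C).indicator hs)
      have hbound : ∀ᵐ y ∂(μ t), |f (x + y) - ftilde x| ≤ g y := by
        filter_upwards [haeN] with y hy
        by_cases hyd : ‖y‖ ≤ δ
        · obtain ⟨hU', hd1⟩ := hball y hyd
          have heq : f (x + y) = ftilde (x + y) := by
            by_contra hne
            exact hy ⟨hne, hU'⟩
          have hlt : |ftilde (x + y) - ftilde x| < ε/2 := by
            have := hδ₁' hd1
            rwa [Real.dist_eq] at this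
          have hind : s.indicator (fun _ => C) y = 0 :=
            Set.indicator_of_notMem (by simpa [hs_def] using hyd) _
          rw [heq]
          simp only [hg, hind, add_zero]
          linarith
        · have h1 : |f (x + y) - ftilde x| ≤ M + |ftilde x| :=
            le_trans (abs_sub _ _) (add_le_add (hM _) le_rfl)
          have hind : s.indicator (fun _ => C) y = C :=
            Set.indicator_of_mem (by simpa [hs_def] using not_le.mp hyd) _
          simp only [hg, hind]
          linarith
      have hint2 : ∫ y, g y ∂(μ t) = ε/2 + (μ t s).toReal * C := by
        rw [hg]
        rw [integral_add (integrable_const _) ((integrable_const C).indicator hs),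
          integral_const, integral_indicator_const _ hs]
        simp [measure_univ, Measure.real]
      have htoReal : (μ t s).toReal < ε/(2*C) := by
        have hne : μ t s ≠ ∞ := measure_ne_top _ _
        rw [← ENNReal.lt_ofReal_iff_toReal_lt hne]
        exact ht1
      have hnn : (0:ℝ) ≤ (μ t s).toReal := ENNReal.toReal_nonneg
      have hcalc : dist (∫ y, f (x + y) ∂(μ t)) (ftilde x) < ε := by
        have h1 : dist (∫ y, f (x + y) ∂(μ t)) (ftilde x)
            = |∫ y, (f (x + y) - ftilde x) ∂(μ t)| := by
          rw [Real.dist_eq, integral_sub hfint (integrable_const _), integral_const]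
          simp [measure_univ]
        rw [h1]
        calc |∫ y, (f (x + y) - ftilde x) ∂(μ t)|
            ≤ ∫ y, |f (x + y) - ftilde x| ∂(μ t) := by simpa [Real.norm_eq_abs] using norm_integral_le_integral_norm (fun y => f (x + y) - ftilde x)
          _ ≤ ∫ y, g y ∂(μ t) := by
              refine integral_mono_ae ((hfint.sub (integrable_const _)).abs) hgint hbound
          _ = ε/2 + (μ t s).toReal * C := hint2
          _ < ε/2 + (ε/(2*C)) * C := by
              have := mul_lt_mul_of_pos_right htoReal hC0
              linarith
          _ = ε := by field_simp; ring
      exact hcalc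
    exact tendsto_nhds_unique (hconv x hx) hconv2
  exact ⟨key, hcont.congr fun z hz => key z hz⟩


end
end
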